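/- arXiv:1606.02928 — 2 statements merged into one kernel-verified Lean document; each statement's English description precedes it below -/
import Mathlib

section
/- For the staircase Ferrers board St_n = B(0,1,…,n−1) and every integer z, ∏_{j=1}^{n} [z + 2(j−1)]_{a q^{−4(j−1)}; q} = Σ_{k=0}^{n} r_k^{(2)}(a,q;St_n) · ∏_{i=1}^{n−k} [z + i − 1]_{a q^{−2(i−1)}; q}. -/
open scoped BigOperators Classical

noncomputable section
namespace EllRook

/-- Modified Jacobi theta function `θ(x;p)`. -/
def theta (x p : ℂ) : ℂ := ∏' j : ℕ, ((1 - p ^ j * x) * (1 - p ^ (j + 1) / x))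

/-- Elliptic small weight `w_{a,b;q,p}(k)`. -/
def ew (a b q p : ℂ) (k : ℤ) : ℂ :=
  q * (theta (a * q ^ (2 * k + 1)) p * theta (b * q ^ k) p * theta (a * q ^ (k - 2) / b) p) /
    (theta (a * q ^ (2 * k - 1)) p * theta (b * q ^ (k + 2)) p * theta (a * q ^ k / b) p)

/-- Elliptic big weight `W_{a,b;q,p}(k)`. -/
def eW (a b q p : ℂ) (k : ℤ) : ℂ :=
  q ^ k *
      (theta (a * q ^ (1 + 2 * k)) p * theta (b * q) p * theta (b * q ^ (2 : ℤ)) p *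
        theta (a * q ^ (-1 : ℤ) / b) p * theta (a / b) p) /
    (theta (a * q) p * theta (b * q ^ (k + 1)) p * theta (b * q ^ (k + 2)) p *
      theta (a * q ^ (k - 1) / b) p * theta (a * q ^ k / b) p)

/-- Elliptic number `[m]_{a,b;q,p}`. -/
def en (a b q p : ℂ) (m : ℤ) : ℂ :=
  (theta (q ^ m) p * theta (a * q ^ m) p * theta (b * q ^ (2 : ℤ)) p * theta (a / b) p) /
    (theta q p * theta (a * q) p * theta (b * q ^ (m + 1)) p * theta (a * q ^ (m - 1) / b) p)

/-- The q-number `[m]_q` for an integer `m`. -/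
def qInt (q : ℂ) (m : ℤ) : ℂ := (1 - q ^ m) / (1 - q)

/-- The Q-shifted factorial `(x;Q)_m`. -/
def qPoch (x Q : ℂ) (m : ℕ) : ℂ := ∏ i ∈ Finset.range m, (1 - x * Q ^ i)

/-- The q-binomial coefficient. -/
def qBinom (q : ℂ) (n k : ℕ) : ℂ :=
  ∏ i ∈ Finset.Icc 1 k, (1 - q ^ ((n : ℤ) - (k : ℤ) + (i : ℤ))) / (1 - q ^ (i : ℤ))

/-- The a;q-number `[m]_{x;q}`. -/
def aqNum (x q : ℂ) (m : ℤ) : ℂ :=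
  q ^ (1 - m) * (1 - q ^ m) * (1 - x * q ^ m) / ((1 - q) * (1 - x * q))

/-- The a;q big weight `W_{x;q}(k)`. -/
def aqW (x q : ℂ) (k : ℤ) : ℂ := q ^ (-k) * (1 - x * q ^ (1 + 2 * k)) / (1 - x * q)

/-- The a;q small weight `w_{a;q}(k)`. -/
def waq (a q : ℂ) (k : ℤ) : ℂ := q⁻¹ * (1 - a * q ^ (2 * k + 1)) / (1 - a * q ^ (2 * k - 1))

/-! Ferrers boards and file placements (alpha-parameter model).
Cells are written `(i, j)` for column `i` (from the left) and row `j` (from the bottom),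
both `1`-indexed. -/

/-- The board `B(h 1, …, h n)`: cells `(i,j)` with `1 ≤ i ≤ n`, `1 ≤ j ≤ h i`. -/
def ferrers (n : ℕ) (h : ℕ → ℕ) : Finset (ℕ × ℕ) :=
  ((Finset.Icc 1 n) ×ˢ (Finset.Icc 1 ((Finset.Icc 1 n).sup h))).filter fun c => c.2 ≤ h c.1

/-- `k`-file placements on a board: `k` cells, at most one per column. -/
def filePl (B : Finset (ℕ × ℕ)) (k : ℕ) : Finset (Finset (ℕ × ℕ)) :=
  B.powerset.filter fun P => P.card = k ∧ ∀ c ∈ P, ∀ d ∈ P, c.1 = d.1 → c = d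

/-- `v(c)`: number of cells of `P` strictly to the left of `c` in the same row. -/
def vP (P : Finset (ℕ × ℕ)) (c : ℕ × ℕ) : ℕ := (P.filter fun d => d.1 < c.1 ∧ d.2 = c.2).card

/-- `r_c(P)`: number of cells of `P` strictly to the left of and strictly above `c`. -/
def rcP (P : Finset (ℕ × ℕ)) (c : ℕ × ℕ) : ℕ := (P.filter fun d => d.1 < c.1 ∧ c.2 < d.2).card

/-- Elliptic weight of a cell in the alpha-parameter model. -/
def cellWt (a b q p : ℂ) (α : ℤ) (P : Finset (ℕ × ℕ)) (c : ℕ × ℕ) : ℂ :=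
  if ∃ d ∈ P, d.1 = c.1 ∧ c.2 < d.2 then 1
  else
    if c ∈ P then
      en (a * q ^ (2 * (-(c.2 : ℤ) + (α - 1) * (1 - (c.1 : ℤ) + (rcP P c : ℤ)))))
        (b * q ^ (-(c.2 : ℤ) + (α - 1) * (1 - (c.1 : ℤ) + (rcP P c : ℤ)))) q p
        ((α - 1) * (vP P c : ℤ) + 1)
    else
      eW (a * q ^ (2 * (-(c.2 : ℤ) + (α - 1) * (1 - (c.1 : ℤ) + (rcP P c : ℤ)))))
        (b * q ^ (-(c.2 : ℤ) + (α - 1) * (1 - (c.1 : ℤ) + (rcP P c : ℤ)))) q p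
        ((α - 1) * (vP P c : ℤ) + 1)

/-- The elliptic alpha-parameter rook number `r_k^{(α)}(a,b;q,p;B)` for the board with
`n` columns of heights `h 1, …, h n`; it is `0` for `k < 0`. -/
def rAlpha (a b q p : ℂ) (α : ℤ) (n : ℕ) (h : ℕ → ℕ) (k : ℤ) : ℂ :=
  if 0 ≤ k then
    ∑ P ∈ filePl (ferrers n h) k.toNat, ∏ c ∈ ferrers n h, cellWt a b q p α P c
  else 0

/-- q-weight of a cell in the alpha-parameter model. -/
def qCellWt (q : ℂ) (α : ℤ) (P : Finset (ℕ × ℕ)) (c : ℕ × ℕ) : ℂ :=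
  if ∃ d ∈ P, d.1 = c.1 ∧ c.2 < d.2 then 1
  else if c ∈ P then qInt q ((α - 1) * (vP P c : ℤ) + 1)
  else q ^ ((α - 1) * (vP P c : ℤ) + 1)

/-- The q-analogue `R_k^{(α)}(q;B)` of the alpha-parameter rook numbers. -/
def Rq (q : ℂ) (α : ℤ) (n : ℕ) (h : ℕ → ℕ) (k : ℕ) : ℂ :=
  ∑ P ∈ filePl (ferrers n h) k, ∏ c ∈ ferrers n h, qCellWt q α P c

/-- a;q-weight of a cell in the α = 2 model. -/
def aqCellWt (a q : ℂ) (P : Finset (ℕ × ℕ)) (c : ℕ × ℕ) : ℂ :=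
  if ∃ d ∈ P, d.1 = c.1 ∧ c.2 < d.2 then 1
  else
    if c ∈ P then
      aqNum (a * q ^ (2 * (-(c.2 : ℤ) + 1 - (c.1 : ℤ) + (rcP P c : ℤ)))) q ((vP P c : ℤ) + 1)
    else
      aqW (a * q ^ (2 * (-(c.2 : ℤ) + 1 - (c.1 : ℤ) + (rcP P c : ℤ)))) q ((vP P c : ℤ) + 1)

/-- Heights of the staircase board `St_n = B(0,1,…,n-1)`. -/
def stH : ℕ → ℕ := fun i => i - 1

/-- `r_k^{(2)}(a,q;St_n)`. -/
def r2aq (a q : ℂ) (n k : ℕ) : ℂ :=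
  ∑ P ∈ filePl (ferrers n stH) k, ∏ c ∈ ferrers n stH, aqCellWt a q P c

/-- The 2-creation rook number `r_k^{(2)}(St_n)` of the staircase board. -/
def r2Nat (n k : ℕ) : ℕ :=
  ∑ P ∈ filePl (ferrers n stH) k,
    ∏ r ∈ Finset.Icc 1 n, (P.filter fun c => c.2 = r).card.factorial

/-! l-shifted boards and rook theory for matchings.
Cells are written `(i, j)` for row `i` and column `j` in the original labelling. -/

/-- `L j = l 1 + ⋯ + l j`. -/
def Lsum (l : ℕ → ℕ) (j : ℕ) : ℕ := ∑ s ∈ Finset.Icc 1 j, l s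

/-- The l-shifted skyline/Ferrers board `B(A 1, …, A N) ⊆ B_N^l`. -/
def lFerrers (N : ℕ) (l A : ℕ → ℕ) : Finset (ℕ × ℕ) :=
  (Finset.Icc 1 N).biUnion fun i =>
    (Finset.Icc 1 (A i)).image fun j =>
      (Lsum l N - Lsum l (N - i + 1) + 1, Lsum l N - Lsum l (N - i + 1) + 1 + j)

/-- Nonattacking condition for rook placements on shifted boards. -/
def nonatt (P : Finset (ℕ × ℕ)) : Prop :=
  ∀ c ∈ P, ∀ d ∈ P, c ≠ d → c.1 ≠ d.1 ∧ c.2 ≠ d.2 ∧ c.2 ≠ d.1 ∧ d.2 ≠ c.1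

/-- `M_k(B)`: placements of `k` nonattacking rooks on `B`. -/
def Mk (B : Finset (ℕ × ℕ)) (k : ℕ) : Finset (Finset (ℕ × ℕ)) :=
  B.powerset.filter fun P => P.card = k ∧ nonatt P

/-- A rook at `(i,j) ∈ P` cancels the cells `(i,s)` with `i < s < j` and the cells
`(t,j)` and `(t,i)` with `t < i`. -/
def cancelled (P : Finset (ℕ × ℕ)) (c : ℕ × ℕ) : Prop :=
  ∃ d ∈ P, (d.1 = c.1 ∧ d.1 < c.2 ∧ c.2 < d.2) ∨ (c.1 < d.1 ∧ (c.2 = d.2 ∨ c.2 = d.1))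

/-- The cells of `B` neither in `P` nor cancelled by a rook of `P`. -/
def uncancelled (B P : Finset (ℕ × ℕ)) : Finset (ℕ × ℕ) :=
  B.filter fun c => c ∉ P ∧ ¬cancelled P c

/-- `m_k(q;B) = Σ_P q^{u_B(P)}`. -/
def mq (q : ℂ) (B : Finset (ℕ × ℕ)) (k : ℕ) : ℂ :=
  ∑ P ∈ Mk B k, q ^ (uncancelled B P).card

/-- The w-row (bottom-to-top index) of the original row labelled `r` in `B_N^l`:
rows are labelled `L_N + 1 - L_{i'}` for the w-row `i'`. -/
def wRow (N : ℕ) (l : ℕ → ℕ) (r : ℕ) : ℕ :=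
  ((Finset.Icc 1 N).filter fun t => Lsum l t ≤ Lsum l N + 1 - r).card

/-- Number of rooks south-east of `c` both of whose cancelled columns are to the right of
the w-column of `c` (in original coordinates: row and column larger than those of `c`,
and the rook's own row label, as a column, also larger than the column of `c`). -/
def rse (P : Finset (ℕ × ℕ)) (c : ℕ × ℕ) : ℕ :=
  (P.filter fun d => c.1 < d.1 ∧ c.2 < d.2 ∧ c.2 < d.1).card

/-- Number of rooks south-east of `c` exactly one of whose cancelled columns is to the
right of the w-column of `c`. -/
def sse (P : Finset (ℕ × ℕ)) (c : ℕ × ℕ) : ℕ :=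
  (P.filter fun d => c.1 < d.1 ∧ c.2 < d.2 ∧ d.1 ≤ c.2).card

/-- The elliptic matchings number `m_k^{(l)}(a,b;q,p;B)`: for a cell of `B_N^l`
in original coordinates `(r,c)`, its w-coordinates are `i = wRow N l r` and
`j = L_N + 2 - c`, and the uncancelled cells get the small weight with argument
`i + j - 1 - l i - 2 r_{(i,j)}(P) - s_{(i,j)}(P)`. -/
def mEll (a b q p : ℂ) (N : ℕ) (l : ℕ → ℕ) (B : Finset (ℕ × ℕ)) (k : ℕ) : ℂ :=
  ∑ P ∈ Mk B k, ∏ c ∈ uncancelled B P,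
    ew a b q p ((wRow N l c.1 : ℤ) + ((Lsum l N : ℤ) + 2 - (c.2 : ℤ)) - 1
      - (l (wRow N l c.1) : ℤ) - 2 * (rse P c : ℤ) - (sse P c : ℤ))

/-- The a;q-analogue `m_k(a,q;B)` of the matchings number. -/
def mAq (a q : ℂ) (N : ℕ) (l : ℕ → ℕ) (B : Finset (ℕ × ℕ)) (k : ℕ) : ℂ :=
  ∑ P ∈ Mk B k, ∏ c ∈ uncancelled B P,
    waq a q ((wRow N l c.1 : ℤ) + ((Lsum l N : ℤ) + 2 - (c.2 : ℤ)) - 1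
      - (l (wRow N l c.1) : ℤ) - 2 * (rse P c : ℤ) - (sse P c : ℤ))


set_option maxHeartbeats 1000000 in
lemma aqNum_add (q x : ℂ) (hq : q ≠ 0) (hq1 : q ≠ 1) (hx1 : 1 - x * q ≠ 0)
    (k m : ℤ) (hx2 : 1 - x * q ^ (2 * k + 1) ≠ 0) :
    aqNum x q (m + k) = aqNum x q k + aqW x q k * aqNum (x * q ^ (2 * k)) q m := by
  have hA : (q : ℂ) ^ m ≠ 0 := zpow_ne_zero _ hq
  have hB : (q : ℂ) ^ k ≠ 0 := zpow_ne_zero _ hq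
  have h1q : (1 : ℂ) - q ≠ 0 := sub_ne_zero.mpr (by simpa using hq1.symm)
  have e1 : q ^ (1 - (m + k)) = q * (q ^ m)⁻¹ * (q ^ k)⁻¹ := by
    rw [show (1 : ℤ) - (m + k) = 1 + (-m) + (-k) by ring, zpow_add₀ hq, zpow_add₀ hq,
      zpow_neg, zpow_neg, zpow_one]
  have e2 : q ^ (m + k) = q ^ m * q ^ k := zpow_add₀ hq m k
  have e3 : q ^ (1 - k) = q * (q ^ k)⁻¹ := by
    rw [show (1 : ℤ) - k = 1 + (-k) by ring, zpow_add₀ hq, zpow_neg, zpow_one]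
  have e4 : q ^ (-k) = (q ^ k)⁻¹ := zpow_neg q k
  have e5 : q ^ (1 - m) = q * (q ^ m)⁻¹ := by
    rw [show (1 : ℤ) - m = 1 + (-m) by ring, zpow_add₀ hq, zpow_neg, zpow_one]
  have e6 : q ^ (2 * k) = q ^ k * q ^ k := by
    rw [show (2 : ℤ) * k = k + k by ring, zpow_add₀ hq]
  have e7 : q ^ (1 + 2 * k) = q * (q ^ k * q ^ k) := by
    rw [zpow_add₀ hq, zpow_one, e6]
  have hx2' : 1 - x * (q ^ k * q ^ k) * q ≠ 0 := by
    rw [show x * (q ^ k * q ^ k) * q = x * q ^ (2 * k + 1) by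
      rw [zpow_add₀ hq, e6, zpow_one]; ring]
    exact hx2
  simp only [aqNum, aqW, e1, e2, e3, e4, e5, e6, e7]
  set A := q ^ m with hAdef
  set B := q ^ k with hBdef
  have d2 : (1 - q) * (1 - x * (B * B) * q) ≠ 0 := mul_ne_zero h1q hx2'
  have d1 : (1 - q) * (1 - x * q) ≠ 0 := mul_ne_zero h1q hx1
  rw [div_mul_div_comm, div_add_div _ _ d1 (mul_ne_zero hx1 d2),
    div_eq_div_iff d1 (mul_ne_zero d1 (mul_ne_zero hx1 d2))]
  field_simp [hA, hB]
  ring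

lemma aqNum_congr (a q : ℂ) {e1 e2 m1 m2 : ℤ} (he : e1 = e2) (hm : m1 = m2) :
    aqNum (a * q ^ e1) q m1 = aqNum (a * q ^ e2) q m2 := by rw [he, hm]

lemma aqW_congr (a q : ℂ) {e1 e2 m1 m2 : ℤ} (he : e1 = e2) (hm : m1 = m2) :
    aqW (a * q ^ e1) q m1 = aqW (a * q ^ e2) q m2 := by rw [he, hm]

lemma hden_mul (q a : ℂ) (hq : q ≠ 0)
    (hden : ∀ j : ℤ, 1 - a * q ^ (2 * j + 1) ≠ 0) (e : ℤ) :
    1 - a * q ^ (2 * e) * q ≠ 0 := by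
  rw [mul_assoc, ← zpow_add_one₀ hq]
  exact hden e

lemma hden_mul2 (q a : ℂ) (hq : q ≠ 0)
    (hden : ∀ j : ℤ, 1 - a * q ^ (2 * j + 1) ≠ 0) (e k : ℤ) :
    1 - a * q ^ (2 * e) * q ^ (2 * k + 1) ≠ 0 := by
  rw [mul_assoc, ← zpow_add₀ hq, show 2 * e + (2 * k + 1) = 2 * (e + k) + 1 by ring]
  exact hden (e + k)

/-- Abstract telescoping identity. -/
lemma abstract_tel (N W A : ℕ → ℂ)
    (h : ∀ m, A (m + 1) = N (m + 1) + W (m + 1) * A m) :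
    ∀ m, A m = (∑ j ∈ Finset.Icc 1 m, N j * ∏ j' ∈ Finset.Icc (j + 1) m, W j')
      + (∏ j ∈ Finset.Icc 1 m, W j) * A 0 := by
  intro m
  induction m with
  | zero => simp
  | succ m ih =>
    have hsplit : ∀ j ∈ Finset.Icc 1 m,
        N j * ∏ j' ∈ Finset.Icc (j + 1) (m + 1), W j'
          = W (m + 1) * (N j * ∏ j' ∈ Finset.Icc (j + 1) m, W j') := by
      intro j hj
      rw [Finset.prod_Icc_succ_top
        (by have := (Finset.mem_Icc.mp hj).2; omega : j + 1 ≤ m + 1)]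
      ring
    rw [Finset.sum_Icc_succ_top (by omega : 1 ≤ m + 1),
      Finset.prod_Icc_succ_top (by omega : 1 ≤ m + 1),
      Finset.sum_congr rfl hsplit, ← Finset.mul_sum,
      show Finset.Icc (m + 1 + 1) (m + 1) = ∅ from Finset.Icc_eq_empty (by omega),
      h m, ih]
    simp only [Finset.prod_empty, mul_one]
    ring
lemma mem_ferrers {n : ℕ} {h : ℕ → ℕ} {c : ℕ × ℕ} :
    c ∈ ferrers n h ↔ 1 ≤ c.1 ∧ c.1 ≤ n ∧ 1 ≤ c.2 ∧ c.2 ≤ h c.1 := by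
  unfold ferrers
  simp only [Finset.mem_filter, Finset.mem_product, Finset.mem_Icc]
  constructor
  · rintro ⟨⟨⟨h1, h2⟩, ⟨h3, _⟩⟩, h5⟩; exact ⟨h1, h2, h3, h5⟩
  · rintro ⟨h1, h2, h3, h4⟩
    exact ⟨⟨⟨h1, h2⟩, h3, le_trans h4 (Finset.le_sup (Finset.mem_Icc.mpr ⟨h1, h2⟩))⟩, h4⟩

/-- All one-per-column placements inside the board. -/
def AP (n : ℕ) : Finset (Finset (ℕ × ℕ)) :=
  (ferrers n stH).powerset.filter fun P => ∀ c ∈ P, ∀ d ∈ P, c.1 = d.1 → c = d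

lemma mem_AP {n : ℕ} {P : Finset (ℕ × ℕ)} :
    P ∈ AP n ↔ P ⊆ ferrers n stH ∧ ∀ c ∈ P, ∀ d ∈ P, c.1 = d.1 → c = d := by
  simp [AP, Finset.mem_filter, Finset.mem_powerset]

lemma card_le_of_AP {n : ℕ} {P : Finset (ℕ × ℕ)} (hP : P ∈ AP n) : P.card ≤ n := by
  obtain ⟨hsub, hone⟩ := mem_AP.mp hP
  calc P.card ≤ (Finset.Icc 1 n).card := by
        apply Finset.card_le_card_of_injOn Prod.fst
        · intro c hc
          have := mem_ferrers.mp (hsub hc)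
          exact Finset.mem_Icc.mpr ⟨this.1, this.2.1⟩
        · intro c hc d hd hcd
          exact hone c hc d hd hcd
    _ = n := by simp

lemma sum_AP (n : ℕ) (F : Finset (ℕ × ℕ) → ℂ) :
    ∑ k ∈ Finset.range (n + 1), ∑ P ∈ filePl (ferrers n stH) k, F P
      = ∑ P ∈ AP n, F P := by
  have hAP : AP n = (Finset.range (n + 1)).biUnion (fun k => filePl (ferrers n stH) k) := by
    ext P
    simp only [Finset.mem_biUnion, Finset.mem_range, filePl, Finset.mem_filter,
      Finset.mem_powerset, mem_AP]
    constructor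
    · rintro ⟨hsub, hone⟩
      exact ⟨P.card, by
        have := card_le_of_AP (mem_AP.mpr ⟨hsub, hone⟩); omega, hsub, rfl, hone⟩
    · rintro ⟨k, _, hsub, _, hone⟩
      exact ⟨hsub, hone⟩
  rw [hAP, Finset.sum_biUnion]
  intro k hk l hl hkl
  simp only [Function.onFun]
  rw [Finset.disjoint_left]
  intro P hPk hPl
  simp only [filePl, Finset.mem_coe, Finset.mem_filter] at hPk hPl
  exact hkl (hPk.2.1 ▸ hPl.2.1 ▸ rfl)

lemma ferrers_mono {n : ℕ} : ferrers n stH ⊆ ferrers (n + 1) stH := by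
  intro c hc
  rw [mem_ferrers] at hc ⊢
  exact ⟨hc.1, by omega, hc.2.2⟩

lemma ferrers_succ (n : ℕ) :
    ferrers (n + 1) stH
      = ferrers n stH ∪ (Finset.Icc 1 n).image (fun j => (n + 1, j)) := by
  ext c
  obtain ⟨c1, c2⟩ := c
  simp only [mem_ferrers, Finset.mem_union, Finset.mem_image, Finset.mem_Icc, stH,
    Prod.mk.injEq]
  constructor
  · rintro ⟨h1, h2, h3, h4⟩
    by_cases hc : c1 ≤ n
    · left; exact ⟨h1, hc, h3, h4⟩
    · right; exact ⟨c2, ⟨h3, by omega⟩, by omega, rfl⟩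
  · rintro (⟨h1, h2, h3, h4⟩ | ⟨j, ⟨hj1, hj2⟩, h1, h2⟩)
    · exact ⟨h1, by omega, h3, h4⟩
    · refine ⟨by omega, by omega, by omega, by omega⟩

lemma ferrers_disj (n : ℕ) :
    Disjoint (ferrers n stH) ((Finset.Icc 1 n).image (fun j => (n + 1, j))) := by
  rw [Finset.disjoint_left]
  intro c hc hc'
  have h1 := (mem_ferrers.mp hc).2.1
  simp only [Finset.mem_image, Finset.mem_Icc] at hc'
  obtain ⟨j, _, hj⟩ := hc'
  have := congrArg Prod.fst hj
  simp only at this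
  omega
lemma vP_insert (n : ℕ) (P : Finset (ℕ × ℕ)) (j₀ j : ℕ) :
    vP (insert (n + 1, j₀) P) (n + 1, j) = vP P (n + 1, j) := by
  unfold vP
  rw [Finset.filter_insert, if_neg (by simp)]

lemma rcP_insert (n : ℕ) (P : Finset (ℕ × ℕ)) (j₀ j : ℕ) :
    rcP (insert (n + 1, j₀) P) (n + 1, j) = rcP P (n + 1, j) := by
  unfold rcP
  rw [Finset.filter_insert, if_neg (by simp)]

/-- Weights of cells in the first `n` columns are unchanged by a cell in column `n+1`. -/
lemma cellWt_insert_left (a q : ℂ) (n : ℕ) (P : Finset (ℕ × ℕ)) (j₀ : ℕ)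
    {c : ℕ × ℕ} (hc : c.1 ≤ n) :
    aqCellWt a q (insert (n + 1, j₀) P) c = aqCellWt a q P c := by
  have hne : ((n + 1 : ℕ), j₀) ≠ c := fun h => by
    have : n + 1 = c.1 := congrArg Prod.fst h; omega
  have hv : vP (insert (n + 1, j₀) P) c = vP P c := by
    unfold vP; rw [Finset.filter_insert, if_neg (by simp; omega)]
  have hr : rcP (insert (n + 1, j₀) P) c = rcP P c := by
    unfold rcP; rw [Finset.filter_insert, if_neg (by simp; omega)]
  have hex : (∃ d ∈ insert (n + 1, j₀) P, d.1 = c.1 ∧ c.2 < d.2)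
      ↔ (∃ d ∈ P, d.1 = c.1 ∧ c.2 < d.2) := by
    simp only [Finset.mem_insert]
    constructor
    · rintro ⟨d, (rfl | hd), h1, h2⟩
      · exact absurd h1 (by simp; omega)
      · exact ⟨d, hd, h1, h2⟩
    · rintro ⟨d, hd, h1, h2⟩; exact ⟨d, Or.inr hd, h1, h2⟩
  have hmem : (c ∈ insert (n + 1, j₀) P) ↔ (c ∈ P) := by
    simp [Finset.mem_insert, (hne.symm : c ≠ ((n+1 : ℕ), j₀))]
  unfold aqCellWt
  rw [hv, hr]
  by_cases h1 : ∃ d ∈ P, d.1 = c.1 ∧ c.2 < d.2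
  · rw [if_pos (hex.mpr h1), if_pos h1]
  · rw [if_neg (fun h => h1 (hex.mp h)), if_neg h1]
    by_cases h2 : c ∈ P
    · rw [if_pos (hmem.mpr h2), if_pos h2]
    · rw [if_neg (fun h => h2 (hmem.mp h)), if_neg h2]

/-- Weight of a column-(n+1) cell with no rook in that column. -/
lemma cellWt_col_noRook (a q : ℂ) (n : ℕ) (P : Finset (ℕ × ℕ))
    (hcols : ∀ d ∈ P, d.1 ≤ n) (j : ℕ) :
    aqCellWt a q P (n + 1, j)
      = aqW (a * q ^ (2 * (-(j : ℤ) + 1 - ((n + 1 : ℕ) : ℤ) + (rcP P (n + 1, j) : ℤ)))) q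
          ((vP P (n + 1, j) : ℤ) + 1) := by
  unfold aqCellWt
  rw [if_neg, if_neg]
  · intro hmem; have := hcols _ hmem; simp at this
  · rintro ⟨d, hd, h1, _⟩; have := hcols d hd; simp at h1; omega

/-- Weight of the rook cell in column n+1. -/
lemma cellWt_col_rook_self (a q : ℂ) (n : ℕ) (P : Finset (ℕ × ℕ))
    (hcols : ∀ d ∈ P, d.1 ≤ n) (j₀ : ℕ) :
    aqCellWt a q (insert (n + 1, j₀) P) (n + 1, j₀)
      = aqNum (a * q ^ (2 * (-(j₀ : ℤ) + 1 - ((n + 1 : ℕ) : ℤ) + (rcP P (n + 1, j₀) : ℤ)))) q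
          ((vP P (n + 1, j₀) : ℤ) + 1) := by
  unfold aqCellWt
  rw [if_neg, if_pos (Finset.mem_insert_self _ _), vP_insert, rcP_insert]
  rintro ⟨d, hd, h1, h2⟩
  rcases Finset.mem_insert.mp hd with rfl | hd'
  · simp at h2
  · have := hcols d hd'; simp at h1; omega

/-- Weight of a column-(n+1) cell above the rook. -/
lemma cellWt_col_above (a q : ℂ) (n : ℕ) (P : Finset (ℕ × ℕ))
    (hcols : ∀ d ∈ P, d.1 ≤ n) (j₀ j : ℕ) (hj : j₀ < j) :
    aqCellWt a q (insert (n + 1, j₀) P) (n + 1, j)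
      = aqW (a * q ^ (2 * (-(j : ℤ) + 1 - ((n + 1 : ℕ) : ℤ) + (rcP P (n + 1, j) : ℤ)))) q
          ((vP P (n + 1, j) : ℤ) + 1) := by
  unfold aqCellWt
  rw [if_neg, if_neg, vP_insert, rcP_insert]
  · intro hmem
    rcases Finset.mem_insert.mp hmem with h | h
    · have : j = j₀ := congrArg Prod.snd h; omega
    · have := hcols _ h; simp at this
  · rintro ⟨d, hd, h1, h2⟩
    rcases Finset.mem_insert.mp hd with rfl | hd'
    · simp at h1 h2; omega
    · have := hcols d hd'; simp at h1; omega

/-- Weight of a column-(n+1) cell below the rook. -/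
lemma cellWt_col_below (a q : ℂ) (n : ℕ) (P : Finset (ℕ × ℕ))
    (j₀ j : ℕ) (hj : j < j₀) :
    aqCellWt a q (insert (n + 1, j₀) P) (n + 1, j) = 1 := by
  unfold aqCellWt
  rw [if_pos]
  exact ⟨(n + 1, j₀), Finset.mem_insert_self _ _, rfl, hj⟩
lemma insert_inj_aux {n : ℕ} {P P' : Finset (ℕ × ℕ)} {j j' : ℕ}
    (hP : ∀ d ∈ P, d.1 ≤ n) (hP' : ∀ d ∈ P', d.1 ≤ n)
    (h : insert ((n + 1 : ℕ), j) P = insert ((n + 1 : ℕ), j') P') : j = j' ∧ P = P' := by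
  have hj : j = j' := by
    have hmem : ((n + 1 : ℕ), j) ∈ insert ((n + 1 : ℕ), j') P' :=
      h ▸ Finset.mem_insert_self _ _
    rcases Finset.mem_insert.mp hmem with he | hm
    · exact (Prod.mk.injEq _ _ _ _ ▸ he).2
    · exact absurd (hP' _ hm) (by simp)
  subst hj
  refine ⟨rfl, ?_⟩
  ext c
  constructor
  · intro hc
    have hmem : c ∈ insert ((n + 1 : ℕ), j) P' := h ▸ Finset.mem_insert_of_mem hc
    rcases Finset.mem_insert.mp hmem with rfl | hm
    · exact absurd (hP _ hc) (by simp)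
    · exact hm
  · intro hc
    have hmem : c ∈ insert ((n + 1 : ℕ), j) P := h.symm ▸ Finset.mem_insert_of_mem hc
    rcases Finset.mem_insert.mp hmem with rfl | hm
    · exact absurd (hP' _ hc) (by simp)
    · exact hm

lemma AP_succ (n : ℕ) :
    AP (n + 1) = AP n ∪ ((AP n ×ˢ Finset.Icc 1 n).image
      fun p => insert ((n + 1 : ℕ), p.2) p.1) := by
  ext P
  simp only [Finset.mem_union, Finset.mem_image, Finset.mem_product]
  constructor
  · intro hP
    obtain ⟨hsub, hone⟩ := mem_AP.mp hP
    by_cases hcol : ∀ c ∈ P, c.1 ≠ n + 1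
    · left
      rw [mem_AP]
      refine ⟨fun c hc => ?_, hone⟩
      have h := mem_ferrers.mp (hsub hc)
      have := hcol c hc
      rw [mem_ferrers]
      exact ⟨h.1, by omega, h.2.2⟩
    · right
      push_neg at hcol
      obtain ⟨c₀, hc₀, hc₀1⟩ := hcol
      refine ⟨(P.erase c₀, c₀.2), ⟨?_, ?_⟩, ?_⟩
      · rw [mem_AP]
        refine ⟨fun c hc => ?_, fun c hc d hd hcd =>
          hone c (Finset.mem_of_mem_erase hc) d (Finset.mem_of_mem_erase hd) hcd⟩
        have hcP := Finset.mem_of_mem_erase hc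
        have h := mem_ferrers.mp (hsub hcP)
        rw [mem_ferrers]
        refine ⟨h.1, ?_, h.2.2⟩
        by_contra hgt
        exact (Finset.ne_of_mem_erase hc) (hone c hcP c₀ hc₀ (by omega))
      · rw [Finset.mem_Icc]
        have h := mem_ferrers.mp (hsub hc₀)
        have h2 := h.2.2.2
        simp only [stH, hc₀1] at h2
        exact ⟨h.2.2.1, by omega⟩
      · have heq : ((n + 1 : ℕ), c₀.2) = c₀ := Prod.ext (by simp [hc₀1]) rfl
        simp only
        rw [heq, Finset.insert_erase hc₀]
  · rintro (hP | ⟨⟨Q, j⟩, ⟨hQ, hj⟩, rfl⟩)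
    · rw [mem_AP] at hP ⊢
      exact ⟨fun c hc => ferrers_mono (hP.1 hc), hP.2⟩
    · obtain ⟨hsub, hone⟩ := mem_AP.mp hQ
      rw [Finset.mem_Icc] at hj
      have hcols : ∀ d ∈ Q, d.1 ≤ n := fun d hd => (mem_ferrers.mp (hsub hd)).2.1
      rw [mem_AP]
      refine ⟨Finset.insert_subset ?_ (fun c hc => ferrers_mono (hsub hc)), ?_⟩
      · rw [mem_ferrers]
        refine ⟨by omega, by omega, hj.1, ?_⟩
        simp only [stH]
        omega
      · intro c hc d hd hcd
        rcases Finset.mem_insert.mp hc with rfl | hc' <;>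
          rcases Finset.mem_insert.mp hd with rfl | hd'
        · rfl
        · exfalso; have := hcols d hd'; simp only at hcd; omega
        · exfalso; have := hcols c hc'; simp only at hcd; omega
        · exact hone c hc' d hd' hcd

lemma AP_succ_disj (n : ℕ) :
    Disjoint (AP n) ((AP n ×ˢ Finset.Icc 1 n).image
      fun p => insert ((n + 1 : ℕ), p.2) p.1) := by
  rw [Finset.disjoint_left]
  intro P hP hP'
  obtain ⟨hsub, _⟩ := mem_AP.mp hP
  simp only [Finset.mem_image, Finset.mem_product] at hP'
  obtain ⟨⟨Q, j⟩, _, heq⟩ := hP'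
  have hmem : ((n + 1 : ℕ), j) ∈ P := heq ▸ Finset.mem_insert_self _ _
  have := (mem_ferrers.mp (hsub hmem)).2.1
  simp at this

lemma split_AP (n : ℕ) (F : Finset (ℕ × ℕ) → ℂ) :
    ∑ P ∈ AP (n + 1), F P
      = ∑ P ∈ AP n, (F P + ∑ j ∈ Finset.Icc 1 n, F (insert (n + 1, j) P)) := by
  have hinj : ∀ p ∈ AP n ×ˢ Finset.Icc 1 n, ∀ p' ∈ AP n ×ˢ Finset.Icc 1 n,
      insert ((n + 1 : ℕ), p.2) p.1 = insert ((n + 1 : ℕ), p'.2) p'.1 → p = p' := by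
    intro p hp p' hp' h
    rw [Finset.mem_product] at hp hp'
    have h1 : ∀ d ∈ p.1, d.1 ≤ n :=
      fun d hd => (mem_ferrers.mp ((mem_AP.mp hp.1).1 hd)).2.1
    have h2 : ∀ d ∈ p'.1, d.1 ≤ n :=
      fun d hd => (mem_ferrers.mp ((mem_AP.mp hp'.1).1 hd)).2.1
    obtain ⟨hj, hP⟩ := insert_inj_aux h1 h2 h
    exact Prod.ext hP hj
  rw [AP_succ n, Finset.sum_union (AP_succ_disj n), Finset.sum_image hinj,
    Finset.sum_product, ← Finset.sum_add_distrib]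

/-- The running product on the right-hand side. -/
def gProd (a q : ℂ) (z : ℤ) (m : ℕ) : ℂ :=
  ∏ i ∈ Finset.Icc 1 m, aqNum (a * q ^ (-2 * ((i : ℤ) - 1))) q (z + (i : ℤ) - 1)

lemma gProd_succ (a q : ℂ) (z : ℤ) (m : ℕ) :
    gProd a q z (m + 1) = gProd a q z m * aqNum (a * q ^ (-2 * (m : ℤ))) q (z + (m : ℤ)) := by
  unfold gProd
  rw [Finset.prod_Icc_succ_top (by omega : 1 ≤ m + 1)]
  congr 1
  exact aqNum_congr a q (by push_cast; ring) (by push_cast; ring)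

def fP (n : ℕ) (P : Finset (ℕ × ℕ)) (j : ℕ) : ℕ := rcP P (n + 1, j)

def vvP (n : ℕ) (P : Finset (ℕ × ℕ)) (j : ℕ) : ℕ := vP P (n + 1, j)

def Nterm (a q : ℂ) (n : ℕ) (P : Finset (ℕ × ℕ)) (j : ℕ) : ℂ :=
  aqNum (a * q ^ (2 * (-(j : ℤ) - (n : ℤ) + (fP n P j : ℤ)))) q ((vvP n P j : ℤ) + 1)

def Wterm (a q : ℂ) (n : ℕ) (P : Finset (ℕ × ℕ)) (j : ℕ) : ℂ :=
  aqW (a * q ^ (2 * (-(j : ℤ) - (n : ℤ) + (fP n P j : ℤ)))) q ((vvP n P j : ℤ) + 1)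

def Aterm (a q : ℂ) (z : ℤ) (n : ℕ) (P : Finset (ℕ × ℕ)) (m : ℕ) : ℂ :=
  aqNum (a * q ^ (2 * (-(m : ℤ) - (n : ℤ) + (fP n P m : ℤ)))) q
    ((z + (n : ℤ)) + (m : ℤ) - (fP n P m : ℤ))

lemma fP_rec (n : ℕ) (P : Finset (ℕ × ℕ)) (j : ℕ) :
    fP n P j = fP n P (j + 1) + vvP n P (j + 1) := by
  unfold fP vvP rcP vP
  have h1 : P.filter (fun d => d.1 < (n + 1, j).1 ∧ (n + 1, j).2 < d.2)
      = P.filter (fun d => (d.1 < (n + 1, j + 1).1 ∧ (n + 1, j + 1).2 < d.2)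
          ∨ (d.1 < (n + 1, j + 1).1 ∧ d.2 = (n + 1, j + 1).2)) := by
    apply Finset.filter_congr
    intro d _
    simp only
    constructor
    · rintro ⟨ha, hb⟩
      by_cases h : d.2 = j + 1
      · exact Or.inr ⟨ha, h⟩
      · exact Or.inl ⟨ha, by omega⟩
    · rintro (⟨ha, hb⟩ | ⟨ha, hb⟩) <;> exact ⟨ha, by omega⟩
  rw [h1, Finset.filter_or, Finset.card_union_of_disjoint]
  rw [Finset.disjoint_left]
  intro d hd1 hd2
  simp only [Finset.mem_filter] at hd1 hd2
  omega

lemma fP_zero (n : ℕ) (P : Finset (ℕ × ℕ)) (hcols : ∀ d ∈ P, d.1 ≤ n)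
    (hrow : ∀ d ∈ P, 1 ≤ d.2) : fP n P 0 = P.card := by
  unfold fP rcP
  rw [Finset.filter_true_of_mem]
  intro d hd
  exact ⟨by have := hcols d hd; simp; omega, by have := hrow d hd; simp; omega⟩

lemma fP_top (n : ℕ) (P : Finset (ℕ × ℕ)) (hrow : ∀ d ∈ P, d.2 ≤ n) : fP n P n = 0 := by
  unfold fP rcP
  rw [Finset.card_eq_zero, Finset.filter_eq_empty_iff]
  intro d hd
  have := hrow d hd
  simp only [not_and]
  intro _
  omega

lemma Aterm_rec (q a : ℂ) (hq : q ≠ 0) (hq1 : q ≠ 1)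
    (hden : ∀ j : ℤ, 1 - a * q ^ (2 * j + 1) ≠ 0) (z : ℤ) (n : ℕ) (P : Finset (ℕ × ℕ))
    (m : ℕ) :
    Aterm a q z n P (m + 1) = Nterm a q n P (m + 1) + Wterm a q n P (m + 1) * Aterm a q z n P m := by
  unfold Aterm Nterm Wterm
  have hrec := fP_rec n P m
  rw [show (z + (n : ℤ)) + ((m + 1 : ℕ) : ℤ) - (fP n P (m + 1) : ℤ)
      = ((z + (n : ℤ)) + (m : ℤ) - (fP n P m : ℤ)) + ((vvP n P (m + 1) : ℤ) + 1) from by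
    push_cast
    omega]
  rw [aqNum_add q _ hq hq1 (hden_mul q a hq hden _) _ _ (hden_mul2 q a hq hden _ _)]
  congr 2
  rw [mul_assoc, ← zpow_add₀ hq]
  congr 2
  congr 1
  push_cast
  omega

lemma Aterm_eq (q a : ℂ) (hq : q ≠ 0) (hq1 : q ≠ 1)
    (hden : ∀ j : ℤ, 1 - a * q ^ (2 * j + 1) ≠ 0) (z : ℤ) (n : ℕ) (P : Finset (ℕ × ℕ)) :
    Aterm a q z n P n
      = (∑ j ∈ Finset.Icc 1 n, Nterm a q n P j * ∏ j' ∈ Finset.Icc (j + 1) n, Wterm a q n P j')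
        + (∏ j ∈ Finset.Icc 1 n, Wterm a q n P j) * Aterm a q z n P 0 :=
  abstract_tel (Nterm a q n P) (Wterm a q n P) (Aterm a q z n P)
    (Aterm_rec q a hq hq1 hden z n P) n
lemma main_ind (q a : ℂ) (hq : q ≠ 0) (hq1 : q ≠ 1)
    (hden : ∀ j : ℤ, 1 - a * q ^ (2 * j + 1) ≠ 0) (z : ℤ) (n : ℕ) :
    ∏ j ∈ Finset.Icc 1 n, aqNum (a * q ^ (-4 * ((j : ℤ) - 1))) q (z + 2 * ((j : ℤ) - 1))
      = ∑ P ∈ AP n, (∏ c ∈ ferrers n stH, aqCellWt a q P c) * gProd a q z (n - P.card) := by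
  induction n with
  | zero =>
    have hfz : ferrers 0 stH = ∅ := by
      ext c
      simp only [mem_ferrers, Finset.notMem_empty, iff_false, not_and]
      omega
    have hAP0 : AP 0 = {∅} := by
      unfold AP
      rw [hfz, Finset.powerset_empty, Finset.filter_singleton,
        if_pos (fun c hc => absurd hc (Finset.notMem_empty c))]
    rw [hAP0, Finset.sum_singleton, hfz,
      show Finset.Icc 1 0 = (∅ : Finset ℕ) from Finset.Icc_eq_empty (by omega)]
    simp only [Finset.prod_empty, Finset.card_empty, Nat.sub_zero, one_mul]
    rw [gProd, show Finset.Icc 1 0 = (∅ : Finset ℕ) from Finset.Icc_eq_empty (by omega),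
      Finset.prod_empty]
  | succ n ih =>
    rw [Finset.prod_Icc_succ_top (by omega : 1 ≤ n + 1), ih,
      split_AP n (fun P => (∏ c ∈ ferrers (n + 1) stH, aqCellWt a q P c)
        * gProd a q z (n + 1 - P.card)),
      Finset.sum_mul]
    apply Finset.sum_congr rfl
    intro P hP
    obtain ⟨hsub, hone⟩ := mem_AP.mp hP
    have hcols : ∀ d ∈ P, d.1 ≤ n := fun d hd => (mem_ferrers.mp (hsub hd)).2.1
    have hrow1 : ∀ d ∈ P, 1 ≤ d.2 := fun d hd => (mem_ferrers.mp (hsub hd)).2.2.1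
    have hrown : ∀ d ∈ P, d.2 ≤ n := by
      intro d hd
      have h := mem_ferrers.mp (hsub hd)
      have h2 := h.2.2.2
      simp only [stH] at h2
      omega
    have hk : P.card ≤ n := card_le_of_AP hP
    have hnotin : ∀ j₀ : ℕ, ((n + 1 : ℕ), j₀) ∉ P := by
      intro j₀ h
      have := hcols _ h
      simp at this
    have hinj : ∀ x ∈ Finset.Icc 1 n, ∀ y ∈ Finset.Icc 1 n,
        ((n + 1 : ℕ), x) = ((n + 1 : ℕ), y) → x = y := fun x _ y _ h => by simpa using h
    have hWtermEq : ∀ j : ℕ, aqCellWt a q P ((n + 1 : ℕ), j) = Wterm a q n P j := by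
      intro j
      rw [cellWt_col_noRook a q n P hcols j]
      exact aqW_congr a q (by push_cast [fP]; ring) (by rw [vvP])
    -- the board split for the rookless placement
    have hB1 : (∏ c ∈ ferrers (n + 1) stH, aqCellWt a q P c)
        = (∏ c ∈ ferrers n stH, aqCellWt a q P c) * ∏ j ∈ Finset.Icc 1 n, Wterm a q n P j := by
      rw [ferrers_succ, Finset.prod_union (ferrers_disj n), Finset.prod_image hinj]
      congr 1
      exact Finset.prod_congr rfl (fun j _ => hWtermEq j)
    -- the board split for placements with a rook in the last column
    have hB2 : ∀ j₀ ∈ Finset.Icc 1 n,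
        (∏ c ∈ ferrers (n + 1) stH, aqCellWt a q (insert ((n + 1 : ℕ), j₀) P) c)
          = (∏ c ∈ ferrers n stH, aqCellWt a q P c)
            * (Nterm a q n P j₀ * ∏ j ∈ Finset.Icc (j₀ + 1) n, Wterm a q n P j) := by
      intro j₀ hj₀
      rw [Finset.mem_Icc] at hj₀
      rw [ferrers_succ, Finset.prod_union (ferrers_disj n), Finset.prod_image hinj]
      congr 1
      · exact Finset.prod_congr rfl
          (fun c hc => cellWt_insert_left a q n P j₀ (mem_ferrers.mp hc).2.1)
      · have hicc : Finset.Icc 1 n = Finset.Icc 1 j₀ ∪ Finset.Icc (j₀ + 1) n := by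
          ext x
          simp only [Finset.mem_Icc, Finset.mem_union]
          omega
        rw [hicc, Finset.prod_union (by
          rw [Finset.disjoint_left]
          intro x h1 h2
          simp only [Finset.mem_Icc] at h1 h2
          omega)]
        congr 1
        · rw [Finset.prod_eq_single_of_mem j₀ (Finset.mem_Icc.mpr ⟨hj₀.1, le_refl _⟩)]
          · rw [cellWt_col_rook_self a q n P hcols j₀]
            exact aqNum_congr a q (by push_cast [fP]; ring) (by rw [vvP])
          · intro b hb hbne
            exact cellWt_col_below a q n P j₀ b (by rw [Finset.mem_Icc] at hb; omega)
        · apply Finset.prod_congr rfl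
          intro j hj
          rw [cellWt_col_above a q n P hcols j₀ j (by rw [Finset.mem_Icc] at hj; omega)]
          exact aqW_congr a q (by push_cast [fP]; ring) (by rw [vvP])
    have hcard : ∀ j₀ : ℕ, (insert ((n + 1 : ℕ), j₀) P).card = P.card + 1 :=
      fun j₀ => Finset.card_insert_of_notMem (hnotin j₀)
    have hg : gProd a q z (n + 1 - P.card)
        = gProd a q z (n - P.card) * Aterm a q z n P 0 := by
      rw [show n + 1 - P.card = (n - P.card) + 1 from by omega, gProd_succ]
      congr 1
      unfold Aterm
      rw [fP_zero n P hcols hrow1]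
      exact aqNum_congr a q (by push_cast [Nat.cast_sub hk]; ring)
        (by push_cast [Nat.cast_sub hk]; ring)
    have hT : aqNum (a * q ^ (-4 * (((n + 1 : ℕ) : ℤ) - 1))) q (z + 2 * (((n + 1 : ℕ) : ℤ) - 1))
        = Aterm a q z n P n := by
      unfold Aterm
      rw [fP_top n P hrown]
      exact aqNum_congr a q (by push_cast; ring) (by push_cast; ring)
    rw [hB1, hg,
      Finset.sum_congr rfl (fun j₀ hj₀ => by
        rw [hB2 j₀ hj₀, hcard j₀, show n + 1 - (P.card + 1) = n - P.card from by omega]),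
      hT, Aterm_eq q a hq hq1 hden z n P]
    have hsum : ∑ j₀ ∈ Finset.Icc 1 n,
          (∏ c ∈ ferrers n stH, aqCellWt a q P c)
            * (Nterm a q n P j₀ * ∏ j ∈ Finset.Icc (j₀ + 1) n, Wterm a q n P j)
            * gProd a q z (n - P.card)
        = ((∏ c ∈ ferrers n stH, aqCellWt a q P c) * gProd a q z (n - P.card))
            * ∑ j₀ ∈ Finset.Icc 1 n,
                Nterm a q n P j₀ * ∏ j ∈ Finset.Icc (j₀ + 1) n, Wterm a q n P j := by
      rw [Finset.mul_sum]
      exact Finset.sum_congr rfl (fun j _ => by ring)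
    rw [hsum]
    ring

/-- a,q-analogue of the alpha-factorization theorem for α = 2 and the staircase board. -/
theorem aq_alpha_two_product (q a : ℂ) (hq : q ≠ 0) (hq1 : q ≠ 1) (ha : a ≠ 0)
    (hden : ∀ j : ℤ, 1 - a * q ^ (2 * j + 1) ≠ 0)
    (n : ℕ) (z : ℤ) :
    ∏ j ∈ Finset.Icc 1 n, aqNum (a * q ^ (-4 * ((j : ℤ) - 1))) q (z + 2 * ((j : ℤ) - 1))
      = ∑ k ∈ Finset.range (n + 1),
          r2aq a q n k
            * ∏ i ∈ Finset.Icc 1 (n - k),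
                aqNum (a * q ^ (-2 * ((i : ℤ) - 1))) q (z + (i : ℤ) - 1) := by
  rw [main_ind q a hq hq1 hden z n, ← sum_AP n
    (fun P => (∏ c ∈ ferrers n stH, aqCellWt a q P c) * gProd a q z (n - P.card))]
  apply Finset.sum_congr rfl
  intro k _
  rw [r2aq, Finset.sum_mul]
  apply Finset.sum_congr rfl
  intro P hPk
  have hc : P.card = k := by
    simp only [filePl, Finset.mem_filter] at hPk
    exact hPk.2.1
  rw [hc]
  rfl

end EllRook
end
end

section
/- Let l = (l_1,…,l_N) be a vector of positive integers and B = B(a_1,…,a_N) an l-shifted Ferrers board contained in B_N^l. Then for every integer z and every nonzero complex q with q ≠ 1, ∏_{i=1}^{N} [z + a_{N−i+1} − 2i + 2]_q = Σ_{k=0}^{N} m_k^{(l)}(q;B) · [z]_q↓↓_{N−k}, where [z]_q↓↓_k = ∏_{j=1}^{k} [z − 2j + 2]_q. -/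
open scoped BigOperators Classical

noncomputable section
namespace EllRook

/-! ### Auxiliary material for `lazy_matching_product` -/

section Aux

/-- Generic row board: rows `1..n`, row `i` starting at position `p i` with `a i` cells. -/
def brd (n : ℕ) (p a : ℕ → ℕ) : Finset (ℕ × ℕ) :=
  (Finset.Icc 1 n).biUnion fun i => (Finset.Icc 1 (a i)).image fun j => (p i, p i + j)

lemma lFerrers_eq_brd (N : ℕ) (l A : ℕ → ℕ) :
    lFerrers N l A = brd N (fun i => Lsum l N - Lsum l (N - i + 1) + 1) A := rfl

lemma mem_brd {n : ℕ} {p a : ℕ → ℕ} {c : ℕ × ℕ} :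
    c ∈ brd n p a ↔ ∃ i, (1 ≤ i ∧ i ≤ n) ∧ ∃ j, (1 ≤ j ∧ j ≤ a i) ∧ (p i, p i + j) = c := by
  simp [brd, Finset.mem_biUnion, Finset.mem_image, Finset.mem_Icc]

lemma mem_Mk {B : Finset (ℕ × ℕ)} {k : ℕ} {P : Finset (ℕ × ℕ)} :
    P ∈ Mk B k ↔ P ⊆ B ∧ P.card = k ∧ nonatt P := by
  simp [Mk, Finset.mem_filter, Finset.mem_powerset, and_assoc]

lemma lsum_succ (l : ℕ → ℕ) (j : ℕ) : Lsum l (j + 1) = Lsum l j + l (j + 1) := by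
  unfold Lsum
  rw [Finset.sum_Icc_succ_top (by omega)]

lemma lsum_mono (l : ℕ → ℕ) {s t : ℕ} (h : s ≤ t) : Lsum l s ≤ Lsum l t := by
  unfold Lsum
  exact Finset.sum_le_sum_of_subset (Finset.Icc_subset_Icc_right h)

/-- Geometric-sum rearrangement: summing `q^(#elements above x)` over a finite set. -/
lemma sum_pow_card_gt (q : ℂ) (S : Finset ℕ) :
    ∑ x ∈ S, q ^ (S.filter (fun y => x < y)).card = ∑ t ∈ Finset.range S.card, q ^ t := by
  induction S using Finset.strongInduction with
  | _ S ih =>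
    rcases S.eq_empty_or_nonempty with h | h
    · simp [h]
    · set M := S.max' h with hMdef
      have hM : M ∈ S := S.max'_mem h
      have hES : insert M (S.erase M) = S := Finset.insert_erase hM
      have hMnot : M ∉ S.erase M := Finset.notMem_erase _ _
      have hcard : S.card = (S.erase M).card + 1 := by
        have h1 := Finset.card_erase_of_mem hM
        have h2 := Finset.card_pos.2 h
        omega
      have hfM : (S.filter (fun y => M < y)).card = 0 := by
        rw [Finset.card_eq_zero, Finset.filter_eq_empty_iff]
        intro y hy
        exact not_lt.2 (S.le_max' y hy)
      have hfx : ∀ x ∈ S.erase M,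
          (S.filter (fun y => x < y)).card
            = ((S.erase M).filter (fun y => x < y)).card + 1 := by
        intro x hx
        have hxM : x < M := by
          rcases Finset.mem_erase.1 hx with ⟨hne, hxS⟩
          exact lt_of_le_of_ne (S.le_max' x hxS) hne
        have : S.filter (fun y => x < y)
            = insert M ((S.erase M).filter (fun y => x < y)) := by
          ext y
          simp only [Finset.mem_filter, Finset.mem_insert, Finset.mem_erase]
          constructor
          · rintro ⟨hyS, hxy⟩
            rcases eq_or_ne y M with rfl | hne
            · exact Or.inl rfl
            · exact Or.inr ⟨⟨hne, hyS⟩, hxy⟩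
          · rintro (rfl | ⟨⟨hne, hyS⟩, hxy⟩)
            · exact ⟨hM, hxM⟩
            · exact ⟨hyS, hxy⟩
        rw [this, Finset.card_insert_of_notMem (fun hc => hMnot (Finset.mem_filter.1 hc).1)]
      calc ∑ x ∈ S, q ^ (S.filter (fun y => x < y)).card
          = ∑ x ∈ insert M (S.erase M), q ^ (S.filter (fun y => x < y)).card := by rw [hES]
        _ = q ^ (S.filter (fun y => M < y)).card
            + ∑ x ∈ S.erase M, q ^ (S.filter (fun y => x < y)).card := by
            rw [Finset.sum_insert hMnot]
        _ = 1 + ∑ x ∈ S.erase M, q * q ^ ((S.erase M).filter (fun y => x < y)).card := by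
            rw [hfM, pow_zero]
            congr 1
            refine Finset.sum_congr rfl fun x hx => ?_
            rw [hfx x hx, pow_succ, mul_comm]
        _ = 1 + q * ∑ t ∈ Finset.range (S.erase M).card, q ^ t := by
            rw [← Finset.mul_sum, ih _ (Finset.erase_ssubset hM)]
        _ = ∑ t ∈ Finset.range S.card, q ^ t := by
            rw [hcard, geom_sum_succ]
            ring

lemma qInt_natCast {q : ℂ} (hq1 : q ≠ 1) (n : ℕ) :
    qInt q (n : ℤ) = ∑ t ∈ Finset.range n, q ^ t := by
  rw [geom_sum_eq hq1, qInt, zpow_natCast]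
  have h1 : (1 : ℂ) - q ≠ 0 := sub_ne_zero.2 (fun h => hq1 h.symm)
  have h2 : q - 1 ≠ 0 := sub_ne_zero.2 hq1
  field_simp
  ring

lemma qInt_add {q : ℂ} (hq : q ≠ 0) (α β : ℤ) :
    qInt q (α + β) = q ^ α * qInt q β + qInt q α := by
  unfold qInt
  rw [mul_div_assoc', ← add_div]
  congr 1
  rw [zpow_add₀ hq]
  ring

/-- No placement of more than `n` nonattacking rooks on an `n`-row board. -/
lemma mq_eq_zero {q : ℂ} {n : ℕ} {p a : ℕ → ℕ} {k : ℕ} (h : n < k) :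
    mq q (brd n p a) k = 0 := by
  have : Mk (brd n p a) k = ∅ := by
    rw [Finset.eq_empty_iff_forall_notMem]
    intro P hP
    rcases mem_Mk.1 hP with ⟨hsub, hcard, hna⟩
    have hinj : Set.InjOn Prod.fst (P : Set (ℕ × ℕ)) := by
      intro c hc d hd hcd
      by_contra hne
      exact ((hna c hc d hd hne).1) hcd
    have him : P.image Prod.fst ⊆ (Finset.Icc 1 n).image p := by
      intro x hx
      rcases Finset.mem_image.1 hx with ⟨c, hc, rfl⟩
      rcases mem_brd.1 (hsub hc) with ⟨i, hi, j, hj, rfl⟩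
      exact Finset.mem_image.2 ⟨i, Finset.mem_Icc.2 ⟨hi.1, hi.2⟩, rfl⟩
    have : k ≤ n := by
      calc k = P.card := hcard.symm
        _ = (P.image Prod.fst).card := (Finset.card_image_of_injOn hinj).symm
        _ ≤ ((Finset.Icc 1 n).image p).card := Finset.card_le_card him
        _ ≤ (Finset.Icc 1 n).card := Finset.card_image_le
        _ = n := by rw [Nat.card_Icc]; omega
    omega
  rw [mq, this, Finset.sum_empty]

end Aux


section Rec

open Finset

/-- The top row of the board `brd (m+1) p a`. -/
def R1 (p a : ℕ → ℕ) : Finset (ℕ × ℕ) :=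
  (Finset.Icc (p 1 + 1) (p 1 + a 1)).image fun y => (p 1, y)

/-- The set of columns attacked (as first or second coordinates) by rooks of `P`. -/
def DD (P : Finset (ℕ × ℕ)) : Finset ℕ := P.image Prod.fst ∪ P.image Prod.snd

/-- Free cells of the top row relative to a placement `P` on the lower rows. -/
def SS (p a : ℕ → ℕ) (P : Finset (ℕ × ℕ)) : Finset ℕ :=
  (Finset.Icc (p 1 + 1) (p 1 + a 1)).filter fun y => y ∉ DD P

lemma mem_R1' (p a : ℕ → ℕ) {c : ℕ × ℕ} :
    c ∈ R1 p a ↔ ∃ y, (p 1 + 1 ≤ y ∧ y ≤ p 1 + a 1) ∧ (p 1, y) = c := by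
  simp [R1, Finset.mem_image, Finset.mem_Icc]

variable (p a : ℕ → ℕ) (m : ℕ)

lemma brd_split :
    brd (m + 1) p a = R1 p a ∪ brd m (fun i => p (i + 1)) (fun i => a (i + 1)) := by
  ext c
  simp only [Finset.mem_union, mem_brd, R1, Finset.mem_image, Finset.mem_Icc]
  constructor
  · rintro ⟨i, ⟨hi1, hi2⟩, j, ⟨hj1, hj2⟩, rfl⟩
    rcases eq_or_ne i 1 with rfl | hne
    · exact Or.inl ⟨p 1 + j, ⟨by omega, by omega⟩, rfl⟩
    · refine Or.inr ⟨i - 1, ⟨by omega, by omega⟩, j, ?_, ?_⟩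
      · have h : i - 1 + 1 = i := by omega
        simp only [h]
        exact ⟨hj1, hj2⟩
      · have h : i - 1 + 1 = i := by omega
        simp only [h]
  · rintro (⟨y, ⟨hy1, hy2⟩, rfl⟩ | ⟨i, ⟨hi1, hi2⟩, j, ⟨hj1, hj2⟩, rfl⟩)
    · refine ⟨1, ⟨le_refl 1, by omega⟩, y - p 1, ⟨by omega, by omega⟩, ?_⟩
      have h : p 1 + (y - p 1) = y := by omega
      rw [h]
    · exact ⟨i + 1, ⟨by omega, by omega⟩, j, ⟨hj1, hj2⟩, rfl⟩

variable (hm : ∀ i j, 1 ≤ i → i < j → j ≤ m + 1 → p i < p j)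
variable (hd : ∀ i j, 1 ≤ i → i ≤ j → j ≤ m + 1 → 1 ≤ a j → p j + a j ≤ p i + a i)

include hm hd in
lemma cellB' {c : ℕ × ℕ} (hc : c ∈ brd m (fun i => p (i + 1)) (fun i => a (i + 1))) :
    p 1 < c.1 ∧ c.1 < c.2 ∧ c.2 ≤ p 1 + a 1 := by
  rcases mem_brd.1 hc with ⟨i, ⟨hi1, hi2⟩, j, ⟨hj1, hj2⟩, rfl⟩
  simp only at hj1 hj2 ⊢
  have h1 : p 1 < p (i + 1) := hm 1 (i + 1) le_rfl (by omega) (by omega)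
  have h2 : p (i + 1) + a (i + 1) ≤ p 1 + a 1 :=
    hd 1 (i + 1) le_rfl (by omega) (by omega) (by omega)
  exact ⟨h1, by omega, by omega⟩

include hm hd in
lemma disjR1B' : Disjoint (R1 p a) (brd m (fun i => p (i + 1)) (fun i => a (i + 1))) := by
  rw [Finset.disjoint_left]
  intro c hcR hcB
  rcases (mem_R1' p a).1 hcR with ⟨y, _, rfl⟩
  exact absurd (cellB' p a m hm hd hcB).1 (lt_irrefl _)

include hm hd in
lemma DD_subset {P : Finset (ℕ × ℕ)} (hsub : P ⊆ brd m (fun i => p (i + 1)) (fun i => a (i + 1))) :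
    DD P ⊆ Finset.Icc (p 1 + 1) (p 1 + a 1) := by
  intro x hx
  rcases Finset.mem_union.1 hx with h | h <;> rcases Finset.mem_image.1 h with ⟨c, hc, rfl⟩ <;>
    · obtain ⟨h1, h2, h3⟩ := cellB' p a m hm hd (hsub hc)
      exact Finset.mem_Icc.2 (by omega)

include hm hd in
lemma DD_card {P : Finset (ℕ × ℕ)}
    (hsub : P ⊆ brd m (fun i => p (i + 1)) (fun i => a (i + 1))) (hna : nonatt P) :
    (DD P).card = 2 * P.card := by
  have hfs : ∀ c ∈ P, c.1 < c.2 := fun c hc => (cellB' p a m hm hd (hsub hc)).2.1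
  have hdisj : Disjoint (P.image Prod.fst) (P.image Prod.snd) := by
    rw [Finset.disjoint_left]
    rintro x hx1 hx2
    rcases Finset.mem_image.1 hx1 with ⟨c, hc, rfl⟩
    rcases Finset.mem_image.1 hx2 with ⟨d, hd', hdc⟩
    rcases eq_or_ne c d with rfl | hne
    · have := hfs c hc; omega
    · exact (hna c hc d hd' hne).2.2.2 hdc
  have h1 : (P.image Prod.fst).card = P.card := by
    apply Finset.card_image_of_injOn
    intro c hc d hd' h
    by_contra hne
    exact (hna c (Finset.mem_coe.1 hc) d (Finset.mem_coe.1 hd') hne).1 h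
  have h2 : (P.image Prod.snd).card = P.card := by
    apply Finset.card_image_of_injOn
    intro c hc d hd' h
    by_contra hne
    exact (hna c (Finset.mem_coe.1 hc) d (Finset.mem_coe.1 hd') hne).2.1 h
  rw [DD, Finset.card_union_of_disjoint hdisj, h1, h2]
  omega

include hm hd in
lemma SS_card {P : Finset (ℕ × ℕ)}
    (hsub : P ⊆ brd m (fun i => p (i + 1)) (fun i => a (i + 1))) (hna : nonatt P) :
    2 * P.card ≤ a 1 ∧ (SS p a P).card = a 1 - 2 * P.card := by
  have hDsub := DD_subset p a m hm hd hsub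
  have hDcard := DD_card p a m hm hd hsub hna
  have hIcc : (Finset.Icc (p 1 + 1) (p 1 + a 1)).card = a 1 := by
    rw [Nat.card_Icc]; omega
  have hmem : (Finset.Icc (p 1 + 1) (p 1 + a 1)).filter (fun y => y ∈ DD P) = DD P := by
    rw [Finset.filter_mem_eq_inter, Finset.inter_eq_right.2 hDsub]
  have h2k : 2 * P.card ≤ a 1 := by
    rw [← hDcard, ← hIcc]
    exact Finset.card_le_card hDsub
  refine ⟨h2k, ?_⟩
  rw [SS, Finset.filter_not, Finset.card_sdiff_of_subset (Finset.filter_subset _ _), hmem, hIcc, hDcard]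

include hm hd in
lemma canc_row1 {P : Finset (ℕ × ℕ)}
    (hsub : P ⊆ brd m (fun i => p (i + 1)) (fun i => a (i + 1))) (y : ℕ) :
    cancelled P (p 1, y) ↔ y ∈ DD P := by
  constructor
  · rintro ⟨d, hd', hcase⟩
    obtain ⟨e1, e2, e3⟩ := cellB' p a m hm hd (hsub hd')
    rcases hcase with ⟨h1, _, _⟩ | ⟨_, h2 | h2⟩
    · exact absurd h1 (by simp only; omega)
    · exact Finset.mem_union.2 (Or.inr (Finset.mem_image.2 ⟨d, hd', h2.symm⟩))
    · exact Finset.mem_union.2 (Or.inl (Finset.mem_image.2 ⟨d, hd', h2.symm⟩))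
  · intro hD
    rcases Finset.mem_union.1 hD with h | h <;> rcases Finset.mem_image.1 h with ⟨d, hd', hdy⟩
    · exact ⟨d, hd', Or.inr ⟨(cellB' p a m hm hd (hsub hd')).1, Or.inr hdy.symm⟩⟩
    · exact ⟨d, hd', Or.inr ⟨(cellB' p a m hm hd (hsub hd')).1, Or.inl hdy.symm⟩⟩

include hm hd in
lemma canc_row1_ins {P : Finset (ℕ × ℕ)}
    (hsub : P ⊆ brd m (fun i => p (i + 1)) (fun i => a (i + 1))) {x y : ℕ} (hy : p 1 < y) :
    cancelled (insert (p 1, x) P) (p 1, y) ↔ (y ∈ DD P ∨ y < x) := by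
  constructor
  · rintro ⟨d, hd', hcase⟩
    rcases Finset.mem_insert.1 hd' with rfl | hdP
    · rcases hcase with ⟨_, _, h3⟩ | ⟨h1, _⟩
      · exact Or.inr h3
      · exact absurd h1 (lt_irrefl _)
    · obtain ⟨e1, e2, e3⟩ := cellB' p a m hm hd (hsub hdP)
      rcases hcase with ⟨h1, _, _⟩ | ⟨_, h2 | h2⟩
      · exact absurd h1 (by simp only; omega)
      · exact Or.inl (Finset.mem_union.2 (Or.inr (Finset.mem_image.2 ⟨d, hdP, h2.symm⟩)))
      · exact Or.inl (Finset.mem_union.2 (Or.inl (Finset.mem_image.2 ⟨d, hdP, h2.symm⟩)))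
  · rintro (hD | hlt)
    · rcases Finset.mem_union.1 hD with h | h <;> rcases Finset.mem_image.1 h with ⟨d, hdP, hdy⟩
      · exact ⟨d, Finset.mem_insert.2 (Or.inr hdP), Or.inr
          ⟨(cellB' p a m hm hd (hsub hdP)).1, Or.inr hdy.symm⟩⟩
      · exact ⟨d, Finset.mem_insert.2 (Or.inr hdP), Or.inr
          ⟨(cellB' p a m hm hd (hsub hdP)).1, Or.inl hdy.symm⟩⟩
    · exact ⟨(p 1, x), Finset.mem_insert_self _ _, Or.inl ⟨rfl, hy, hlt⟩⟩

lemma canc_irrel (P : Finset (ℕ × ℕ)) (x : ℕ) {c : ℕ × ℕ} (hc : p 1 < c.1) :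
    cancelled (insert (p 1, x) P) c ↔ cancelled P c := by
  constructor
  · rintro ⟨d, hd', hcase⟩
    rcases Finset.mem_insert.1 hd' with rfl | hdP
    · rcases hcase with ⟨h1, _, _⟩ | ⟨h1, _⟩
      · exact absurd h1 (by simp only; omega)
      · exact absurd h1 (by simp only; omega)
    · exact ⟨d, hdP, hcase⟩
  · rintro ⟨d, hdP, hcase⟩
    exact ⟨d, Finset.mem_insert.2 (Or.inr hdP), hcase⟩

lemma unc_split (P : Finset (ℕ × ℕ)) :
    uncancelled (brd (m + 1) p a) P
      = uncancelled (R1 p a) P ∪ uncancelled (brd m (fun i => p (i + 1)) (fun i => a (i + 1))) P := by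
  unfold uncancelled
  rw [brd_split p a m, Finset.filter_union]

include hm hd in
lemma unc_disj (P Q : Finset (ℕ × ℕ)) :
    Disjoint (uncancelled (R1 p a) P)
      (uncancelled (brd m (fun i => p (i + 1)) (fun i => a (i + 1))) Q) :=
  Finset.disjoint_filter_filter (disjR1B' p a m hm hd)

include hm hd in
lemma unc_noRook_card {P : Finset (ℕ × ℕ)}
    (hsub : P ⊆ brd m (fun i => p (i + 1)) (fun i => a (i + 1))) (hna : nonatt P) :
    2 * P.card ≤ a 1 ∧
      (uncancelled (brd (m + 1) p a) P).card
        = (a 1 - 2 * P.card) + (uncancelled (brd m (fun i => p (i + 1)) (fun i => a (i + 1))) P).card := by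
  obtain ⟨h2k, hSS⟩ := SS_card p a m hm hd hsub hna
  refine ⟨h2k, ?_⟩
  have hR1 : uncancelled (R1 p a) P = (SS p a P).image (fun y => (p 1, y)) := by
    ext c
    simp only [uncancelled, Finset.mem_filter, Finset.mem_image, SS, Finset.mem_Icc]
    constructor
    · rintro ⟨hcR, hnm, hnc⟩
      rcases (mem_R1' p a).1 hcR with ⟨y, ⟨h1, h2⟩, rfl⟩
      exact ⟨y, ⟨⟨h1, h2⟩, fun hD => hnc ((canc_row1 p a m hm hd hsub y).2 hD)⟩, rfl⟩
    · rintro ⟨y, ⟨⟨h1, h2⟩, hD⟩, rfl⟩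
      refine ⟨(mem_R1' p a).2 ⟨y, ⟨h1, h2⟩, rfl⟩, ?_,
        fun hc => hD ((canc_row1 p a m hm hd hsub y).1 hc)⟩
      intro hmem
      exact absurd (cellB' p a m hm hd (hsub hmem)).1 (lt_irrefl _)
  rw [unc_split p a m, Finset.card_union_of_disjoint (unc_disj p a m hm hd P P), hR1,
    Finset.card_image_of_injective _ (fun y₁ y₂ h => by simpa using congrArg Prod.snd h), hSS]

include hm hd in
lemma unc_insert_card {P' : Finset (ℕ × ℕ)}
    (hsub : P' ⊆ brd m (fun i => p (i + 1)) (fun i => a (i + 1))) (hna : nonatt P')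
    {x : ℕ} (hx : x ∈ SS p a P') :
    (uncancelled (brd (m + 1) p a) (insert (p 1, x) P')).card
      = ((SS p a P').filter (fun y => x < y)).card
        + (uncancelled (brd m (fun i => p (i + 1)) (fun i => a (i + 1))) P').card := by
  obtain ⟨hxIcc, hxD⟩ := Finset.mem_filter.1 hx
  rw [Finset.mem_Icc] at hxIcc
  have hB'part : uncancelled (brd m (fun i => p (i + 1)) (fun i => a (i + 1))) (insert (p 1, x) P')
      = uncancelled (brd m (fun i => p (i + 1)) (fun i => a (i + 1))) P' := by
    unfold uncancelled
    refine Finset.filter_congr fun c hc => ?_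
    obtain ⟨e1, e2, e3⟩ := cellB' p a m hm hd hc
    have hcne : c ≠ (p 1, x) := by
      intro h
      rw [h] at e1
      exact lt_irrefl _ e1
    rw [canc_irrel p P' x e1]
    simp [Finset.mem_insert, hcne]
  have hR1part : uncancelled (R1 p a) (insert (p 1, x) P')
      = ((SS p a P').filter (fun y => x < y)).image (fun y => (p 1, y)) := by
    ext c
    simp only [uncancelled, Finset.mem_filter, Finset.mem_image, SS, Finset.mem_Icc]
    constructor
    · rintro ⟨hcR, hnm, hnc⟩
      rcases (mem_R1' p a).1 hcR with ⟨y, ⟨h1, h2⟩, rfl⟩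
      have hyx : y ≠ x := by
        intro h
        exact hnm (by rw [h]; exact Finset.mem_insert_self _ _)
      have hcanc := canc_row1_ins p a m hm hd hsub (show p 1 < y by omega) (x := x)
      have hynD : ¬(y ∈ DD P' ∨ y < x) := fun h => hnc (hcanc.2 h)
      push_neg at hynD
      exact ⟨y, ⟨⟨⟨h1, h2⟩, hynD.1⟩, by omega⟩, rfl⟩
    · rintro ⟨y, ⟨⟨⟨h1, h2⟩, hyD⟩, hxy⟩, rfl⟩
      refine ⟨(mem_R1' p a).2 ⟨y, ⟨h1, h2⟩, rfl⟩, ?_, ?_⟩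
      · intro hmem
        rcases Finset.mem_insert.1 hmem with h | h
        · have : y = x := by simpa using congrArg Prod.snd h
          omega
        · exact absurd (cellB' p a m hm hd (hsub h)).1 (lt_irrefl _)
      · rw [canc_row1_ins p a m hm hd hsub (show p 1 < y by omega)]
        rintro (h | h)
        · exact hyD h
        · omega
  rw [unc_split p a m, Finset.card_union_of_disjoint (unc_disj p a m hm hd _ _), hB'part, hR1part,
    Finset.card_image_of_injective _ (fun y₁ y₂ h => by simpa using congrArg Prod.snd h)]

include hm hd in
lemma Mk_filter_not (k : ℕ) :
    (Mk (brd (m + 1) p a) k).filter (fun P => ¬ ∃ c ∈ P, c.1 = p 1)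
      = Mk (brd m (fun i => p (i + 1)) (fun i => a (i + 1))) k := by
  ext P
  simp only [Finset.mem_filter, mem_Mk]
  constructor
  · rintro ⟨⟨hsub, hcard, hna⟩, hno⟩
    refine ⟨?_, hcard, hna⟩
    intro c hc
    have hcB := hsub hc
    rw [brd_split p a m] at hcB
    rcases Finset.mem_union.1 hcB with h | h
    · exfalso
      apply hno
      rcases (mem_R1' p a).1 h with ⟨y, _, rfl⟩
      exact ⟨_, hc, rfl⟩
    · exact h
  · rintro ⟨hsub, hcard, hna⟩
    refine ⟨⟨?_, hcard, hna⟩, ?_⟩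
    · rw [brd_split p a m]
      exact fun c hc => Finset.mem_union_right _ (hsub hc)
    · rintro ⟨c, hc, hc1⟩
      have := (cellB' p a m hm hd (hsub hc)).1
      omega

include hm hd in
lemma sum_T0 (q : ℂ) (k : ℕ) :
    ∑ P ∈ Mk (brd m (fun i => p (i + 1)) (fun i => a (i + 1))) k,
        q ^ (uncancelled (brd (m + 1) p a) P).card
      = q ^ ((a 1 : ℤ) - 2 * (k : ℤ)) * mq q (brd m (fun i => p (i + 1)) (fun i => a (i + 1))) k := by
  rw [mq, Finset.mul_sum]
  refine Finset.sum_congr rfl fun P hP => ?_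
  rcases mem_Mk.1 hP with ⟨hsub, hcard, hna⟩
  obtain ⟨h2k, hu⟩ := unc_noRook_card p a m hm hd hsub hna
  rw [hcard] at h2k hu
  rw [hu, pow_add]
  congr 1
  have he : ((a 1 : ℤ) - 2 * (k : ℤ)) = ((a 1 - 2 * k : ℕ) : ℤ) := by omega
  rw [he, zpow_natCast]

include hm hd in
lemma sum_T1 (q : ℂ) (hq1 : q ≠ 1) (k' : ℕ) :
    ∑ P ∈ (Mk (brd (m + 1) p a) (k' + 1)).filter (fun P => ∃ c ∈ P, c.1 = p 1),
        q ^ (uncancelled (brd (m + 1) p a) P).card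
      = qInt q ((a 1 : ℤ) - 2 * (k' : ℤ))
        * mq q (brd m (fun i => p (i + 1)) (fun i => a (i + 1))) k' := by
  have main : ∑ s ∈ (Mk (brd m (fun i => p (i + 1)) (fun i => a (i + 1))) k').sigma
        (fun P' => SS p a P'),
        (q ^ ((SS p a s.1).filter (fun y => s.2 < y)).card
          * q ^ (uncancelled (brd m (fun i => p (i + 1)) (fun i => a (i + 1))) s.1).card)
      = ∑ P ∈ (Mk (brd (m + 1) p a) (k' + 1)).filter (fun P => ∃ c ∈ P, c.1 = p 1),
          q ^ (uncancelled (brd (m + 1) p a) P).card := by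
    refine Finset.sum_bij (fun s _ => insert (p 1, s.2) s.1) ?_ ?_ ?_ ?_
    · -- maps into
      rintro ⟨P', x⟩ hs
      obtain ⟨hP', hx⟩ := Finset.mem_sigma.1 hs
      rcases mem_Mk.1 hP' with ⟨hsub, hcard, hna⟩
      obtain ⟨hxIcc, hxD⟩ := Finset.mem_filter.1 hx
      rw [Finset.mem_Icc] at hxIcc
      have hxD' : ∀ d ∈ P', x ≠ d.1 ∧ x ≠ d.2 := by
        intro d hdP
        constructor <;> intro heq <;> apply hxD
        · exact Finset.mem_union.2 (Or.inl (Finset.mem_image.2 ⟨d, hdP, heq.symm⟩))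
        · exact Finset.mem_union.2 (Or.inr (Finset.mem_image.2 ⟨d, hdP, heq.symm⟩))
      have hnotin : (p 1, x) ∉ P' := by
        intro h
        exact absurd (cellB' p a m hm hd (hsub h)).1 (lt_irrefl _)
      refine Finset.mem_filter.2 ⟨mem_Mk.2 ⟨?_, ?_, ?_⟩,
        ⟨(p 1, x), Finset.mem_insert_self _ _, rfl⟩⟩
      · rw [brd_split p a m]
        intro c hc
        rcases Finset.mem_insert.1 hc with rfl | hc'
        · exact Finset.mem_union_left _
            ((mem_R1' p a).2 ⟨x, ⟨hxIcc.1, hxIcc.2⟩, rfl⟩)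
        · exact Finset.mem_union_right _ (hsub hc')
      · rw [Finset.card_insert_of_notMem hnotin, hcard]
      · intro c hc d hd' hne
        rcases Finset.mem_insert.1 hc with rfl | hcP <;> rcases Finset.mem_insert.1 hd' with rfl | hdP
        · exact absurd rfl hne
        · obtain ⟨e1, e2, e3⟩ := cellB' p a m hm hd (hsub hdP)
          obtain ⟨f1, f2⟩ := hxD' d hdP
          exact ⟨by simp only; omega, by simp only; exact f2, by simp only; exact f1,
            by simp only; omega⟩
        · obtain ⟨e1, e2, e3⟩ := cellB' p a m hm hd (hsub hcP)
          obtain ⟨f1, f2⟩ := hxD' c hcP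
          exact ⟨by simp only; omega, by simp only; exact fun h => f2 h.symm,
            by simp only; omega, by simp only; exact f1⟩
        · exact hna c hcP d hdP hne
    · -- injective
      rintro ⟨P1, x1⟩ hs1 ⟨P2, x2⟩ hs2 heq
      obtain ⟨hP1, hx1⟩ := Finset.mem_sigma.1 hs1
      obtain ⟨hP2, hx2⟩ := Finset.mem_sigma.1 hs2
      rcases mem_Mk.1 hP1 with ⟨hsub1, _, _⟩
      rcases mem_Mk.1 hP2 with ⟨hsub2, _, _⟩
      simp only at heq
      have hxx : x1 = x2 := by
        have h1 : (p 1, x1) ∈ insert (p 1, x2) P2 := by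
          rw [← heq]; exact Finset.mem_insert_self _ _
        rcases Finset.mem_insert.1 h1 with h | h
        · simpa using congrArg Prod.snd h
        · exact absurd (cellB' p a m hm hd (hsub2 h)).1 (lt_irrefl _)
      subst hxx
      have hPP : P1 = P2 := by
        ext c
        constructor <;> intro hc
        · have : c ∈ insert (p 1, x1) P2 := by
            rw [← heq]; exact Finset.mem_insert_of_mem hc
          rcases Finset.mem_insert.1 this with rfl | h
          · exact absurd (cellB' p a m hm hd (hsub1 hc)).1 (lt_irrefl _)
          · exact h
        · have : c ∈ insert (p 1, x1) P1 := by
            rw [heq]; exact Finset.mem_insert_of_mem hc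
          rcases Finset.mem_insert.1 this with rfl | h
          · exact absurd (cellB' p a m hm hd (hsub2 hc)).1 (lt_irrefl _)
          · exact h
      simp [hPP]
    · -- surjective
      intro P hP
      obtain ⟨hPMk, hex⟩ := Finset.mem_filter.1 hP
      obtain ⟨c, hcP, hc1⟩ := hex
      rcases mem_Mk.1 hPMk with ⟨hsub, hcard, hna⟩
      have hcR : c ∈ R1 p a := by
        have hcB := hsub hcP
        rw [brd_split p a m] at hcB
        rcases Finset.mem_union.1 hcB with h | h
        · exact h
        · have := (cellB' p a m hm hd h).1
          omega
      rcases (mem_R1' p a).1 hcR with ⟨y, ⟨hy1, hy2⟩, rfl⟩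
      have herase_sub : P.erase (p 1, y) ⊆ brd m (fun i => p (i + 1)) (fun i => a (i + 1)) := by
        intro d hdP'
        obtain ⟨hdne, hdP⟩ := Finset.mem_erase.1 hdP'
        have hdB := hsub hdP
        rw [brd_split p a m] at hdB
        rcases Finset.mem_union.1 hdB with h | h
        · exfalso
          rcases (mem_R1' p a).1 h with ⟨y', _, rfl⟩
          exact (hna (p 1, y') hdP (p 1, y) hcP hdne).1 rfl
        · exact h
      have hna' : nonatt (P.erase (p 1, y)) := fun c hc d hd' hne =>
        hna c (Finset.mem_erase.1 hc).2 d (Finset.mem_erase.1 hd').2 hne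
      refine ⟨⟨P.erase (p 1, y), y⟩, Finset.mem_sigma.2 ⟨mem_Mk.2 ⟨herase_sub, ?_, hna'⟩, ?_⟩, ?_⟩
      · rw [Finset.card_erase_of_mem hcP, hcard]
        omega
      · refine Finset.mem_filter.2 ⟨Finset.mem_Icc.2 ⟨hy1, hy2⟩, ?_⟩
        intro hyD
        rcases Finset.mem_union.1 hyD with h | h <;>
          rcases Finset.mem_image.1 h with ⟨d, hdP', hdy⟩ <;>
          obtain ⟨hdne, hdP⟩ := Finset.mem_erase.1 hdP'
        · exact (hna (p 1, y) hcP d hdP (Ne.symm hdne)).2.2.1 hdy.symm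
        · exact (hna (p 1, y) hcP d hdP (Ne.symm hdne)).2.1 hdy.symm
      · exact Finset.insert_erase hcP
    · -- values
      rintro ⟨P', x⟩ hs
      obtain ⟨hP', hx⟩ := Finset.mem_sigma.1 hs
      rcases mem_Mk.1 hP' with ⟨hsub, hcard, hna⟩
      simp only
      rw [unc_insert_card p a m hm hd hsub hna hx, pow_add]
  rw [← main, Finset.sum_sigma, mq, Finset.mul_sum]
  refine Finset.sum_congr rfl fun P' hP' => ?_
  rcases mem_Mk.1 hP' with ⟨hsub, hcard, hna⟩
  obtain ⟨h2k, hSS⟩ := SS_card p a m hm hd hsub hna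
  rw [hcard] at h2k hSS
  dsimp only
  rw [← Finset.sum_mul, sum_pow_card_gt, ← qInt_natCast hq1, hSS]
  congr 2
  omega

include hm hd in
lemma mq_rec_succ (q : ℂ) (hq1 : q ≠ 1) (k' : ℕ) :
    mq q (brd (m + 1) p a) (k' + 1)
      = q ^ ((a 1 : ℤ) - 2 * ((k' : ℤ) + 1))
          * mq q (brd m (fun i => p (i + 1)) (fun i => a (i + 1))) (k' + 1)
        + qInt q ((a 1 : ℤ) - 2 * (k' : ℤ))
          * mq q (brd m (fun i => p (i + 1)) (fun i => a (i + 1))) k' := by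
  rw [mq, ← Finset.sum_filter_add_sum_filter_not (Mk (brd (m + 1) p a) (k' + 1))
    (fun P => ∃ c ∈ P, c.1 = p 1)]
  rw [sum_T1 p a m hm hd q hq1 k', Mk_filter_not p a m hm hd (k' + 1),
    sum_T0 p a m hm hd q (k' + 1)]
  have he : ((a 1 : ℤ) - 2 * ((k' + 1 : ℕ) : ℤ)) = ((a 1 : ℤ) - 2 * ((k' : ℤ) + 1)) := by
    push_cast
    ring
  rw [he, add_comm]

include hm hd in
lemma mq_rec_zero (q : ℂ) :
    mq q (brd (m + 1) p a) 0
      = q ^ ((a 1 : ℤ)) * mq q (brd m (fun i => p (i + 1)) (fun i => a (i + 1))) 0 := by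
  rw [mq, ← Finset.sum_filter_add_sum_filter_not (Mk (brd (m + 1) p a) 0)
    (fun P => ∃ c ∈ P, c.1 = p 1)]
  have h1 : (Mk (brd (m + 1) p a) 0).filter (fun P => ∃ c ∈ P, c.1 = p 1) = ∅ := by
    rw [Finset.eq_empty_iff_forall_notMem]
    rintro P hP
    obtain ⟨hPM, c, hc, _⟩ := Finset.mem_filter.1 hP
    rcases mem_Mk.1 hPM with ⟨_, hcard, _⟩
    rw [Finset.card_eq_zero] at hcard
    subst hcard
    exact absurd hc (Finset.notMem_empty c)
  rw [h1, Finset.sum_empty, zero_add, Mk_filter_not p a m hm hd 0, sum_T0 p a m hm hd q 0]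
  norm_num

end Rec

lemma G (q : ℂ) (hq : q ≠ 0) (hq1 : q ≠ 1) :
    ∀ (n : ℕ) (p a : ℕ → ℕ),
      (∀ i j, 1 ≤ i → i < j → j ≤ n → p i < p j) →
      (∀ i j, 1 ≤ i → i ≤ j → j ≤ n → 1 ≤ a j → p j + a j ≤ p i + a i) →
      ∀ z : ℤ,
        ∏ i ∈ Finset.Icc 1 n, qInt q (z + (a (n - i + 1) : ℤ) - 2 * (i : ℤ) + 2)
          = ∑ k ∈ Finset.range (n + 1),
              mq q (brd n p a) k * ∏ j ∈ Finset.Icc 1 (n - k), qInt q (z - 2 * (j : ℤ) + 2) := by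
  intro n
  induction n with
  | zero =>
    intro p a _ _ z
    have hb : brd 0 p a = ∅ := by simp [brd]
    have hMk : Mk (∅ : Finset (ℕ × ℕ)) 0 = {∅} := by
      ext P
      simp only [Finset.mem_singleton, mem_Mk]
      constructor
      · rintro ⟨h, _, _⟩
        exact Finset.subset_empty.1 h
      · rintro rfl
        exact ⟨Finset.Subset.refl _, rfl, fun c hc => absurd hc (Finset.notMem_empty c)⟩
    rw [hb]
    simp [mq, hMk, uncancelled]
  | succ m ih =>
    intro p a hm hd z
    have hm' : ∀ i j, 1 ≤ i → i < j → j ≤ m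
        → (fun i => p (i + 1)) i < (fun i => p (i + 1)) j := by
      intro i j h1 h2 h3
      exact hm (i + 1) (j + 1) (by omega) (by omega) (by omega)
    have hd' : ∀ i j, 1 ≤ i → i ≤ j → j ≤ m → 1 ≤ (fun i => a (i + 1)) j
        → (fun i => p (i + 1)) j + (fun i => a (i + 1)) j
          ≤ (fun i => p (i + 1)) i + (fun i => a (i + 1)) i := by
      intro i j h1 h2 h3 h4
      exact hd (i + 1) (j + 1) (by omega) (by omega) (by omega) h4
    have IH := ih (fun i => p (i + 1)) (fun i => a (i + 1)) hm' hd' z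
    -- Factor the last term out of the left-hand side.
    have hL : ∏ i ∈ Finset.Icc 1 (m + 1), qInt q (z + (a (m + 1 - i + 1) : ℤ) - 2 * (i : ℤ) + 2)
        = (∏ i ∈ Finset.Icc 1 m,
            qInt q (z + ((fun i => a (i + 1)) (m - i + 1) : ℤ) - 2 * (i : ℤ) + 2))
          * qInt q (z + (a 1 : ℤ) - 2 * (m : ℤ)) := by
      rw [Finset.prod_Icc_succ_top (by omega : 1 ≤ m + 1)]
      congr 1
      · refine Finset.prod_congr rfl fun i hi => ?_
        rw [Finset.mem_Icc] at hi
        have h : m + 1 - i + 1 = (m - i + 1) + 1 := by omega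
        rw [h]
      · have h1 : m + 1 - (m + 1) + 1 = 1 := by omega
        rw [h1]
        congr 1
        push_cast
        ring
    -- The per-index combination identity.
    have key : ∀ k ∈ Finset.range (m + 1),
        (mq q (brd m (fun i => p (i + 1)) (fun i => a (i + 1))) k
            * ∏ j ∈ Finset.Icc 1 (m - k), qInt q (z - 2 * (j : ℤ) + 2))
          * qInt q (z + (a 1 : ℤ) - 2 * (m : ℤ))
        = q ^ ((a 1 : ℤ) - 2 * (k : ℤ))
            * mq q (brd m (fun i => p (i + 1)) (fun i => a (i + 1))) k
            * ∏ j ∈ Finset.Icc 1 (m + 1 - k), qInt q (z - 2 * (j : ℤ) + 2)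
          + qInt q ((a 1 : ℤ) - 2 * (k : ℤ))
            * mq q (brd m (fun i => p (i + 1)) (fun i => a (i + 1))) k
            * ∏ j ∈ Finset.Icc 1 (m - k), qInt q (z - 2 * (j : ℤ) + 2) := by
      intro k hk
      rw [Finset.mem_range] at hk
      have hidx : m + 1 - k = (m - k) + 1 := by omega
      rw [hidx, Finset.prod_Icc_succ_top (by omega : 1 ≤ (m - k) + 1)]
      have htop : (z - 2 * (((m - k) + 1 : ℕ) : ℤ) + 2) = z - 2 * (m : ℤ) + 2 * (k : ℤ) := by
        have : (((m - k) + 1 : ℕ) : ℤ) = (m : ℤ) - (k : ℤ) + 1 := by omega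
        rw [this]
        ring
      rw [htop]
      have hadd := qInt_add hq ((a 1 : ℤ) - 2 * (k : ℤ)) (z - 2 * (m : ℤ) + 2 * (k : ℤ))
      have harg : (a 1 : ℤ) - 2 * (k : ℤ) + (z - 2 * (m : ℤ) + 2 * (k : ℤ))
          = z + (a 1 : ℤ) - 2 * (m : ℤ) := by ring
      rw [harg] at hadd
      rw [hadd]
      ring
    rw [hL, IH, Finset.sum_mul, Finset.sum_congr rfl key, Finset.sum_add_distrib]
    -- Now handle the right-hand side.
    rw [Finset.sum_range_succ' (fun k => mq q (brd (m + 1) p a) k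
      * ∏ j ∈ Finset.Icc 1 (m + 1 - k), qInt q (z - 2 * (j : ℤ) + 2)) (m + 1)]
    have hstep : ∀ k ∈ Finset.range (m + 1),
        mq q (brd (m + 1) p a) (k + 1)
            * ∏ j ∈ Finset.Icc 1 (m + 1 - (k + 1)), qInt q (z - 2 * (j : ℤ) + 2)
        = (q ^ ((a 1 : ℤ) - 2 * (((k + 1) : ℕ) : ℤ))
              * mq q (brd m (fun i => p (i + 1)) (fun i => a (i + 1))) (k + 1)
              * ∏ j ∈ Finset.Icc 1 (m + 1 - (k + 1)), qInt q (z - 2 * (j : ℤ) + 2))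
          + qInt q ((a 1 : ℤ) - 2 * (k : ℤ))
              * mq q (brd m (fun i => p (i + 1)) (fun i => a (i + 1))) k
              * ∏ j ∈ Finset.Icc 1 (m - k), qInt q (z - 2 * (j : ℤ) + 2) := by
      intro k hk
      rw [Finset.mem_range] at hk
      have hidx : m + 1 - (k + 1) = m - k := by omega
      rw [hidx, mq_rec_succ p a m hm hd q hq1 k]
      have he : ((a 1 : ℤ) - 2 * (((k + 1) : ℕ) : ℤ)) = ((a 1 : ℤ) - 2 * ((k : ℤ) + 1)) := by
        push_cast
        ring
      rw [he]
      ring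
    rw [Finset.sum_congr rfl hstep, Finset.sum_add_distrib]
    -- Identify the shifted geometric part with the full sum over `range (m+2)`.
    have hshift : (∑ k ∈ Finset.range (m + 1),
          q ^ ((a 1 : ℤ) - 2 * (((k + 1) : ℕ) : ℤ))
            * mq q (brd m (fun i => p (i + 1)) (fun i => a (i + 1))) (k + 1)
            * ∏ j ∈ Finset.Icc 1 (m + 1 - (k + 1)), qInt q (z - 2 * (j : ℤ) + 2))
          + mq q (brd (m + 1) p a) 0
            * ∏ j ∈ Finset.Icc 1 (m + 1 - 0), qInt q (z - 2 * (j : ℤ) + 2)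
        = ∑ k ∈ Finset.range (m + 1),
            q ^ ((a 1 : ℤ) - 2 * ((k : ℕ) : ℤ))
              * mq q (brd m (fun i => p (i + 1)) (fun i => a (i + 1))) k
              * ∏ j ∈ Finset.Icc 1 (m + 1 - k), qInt q (z - 2 * (j : ℤ) + 2) := by
      have hzero : mq q (brd (m + 1) p a) 0
          * ∏ j ∈ Finset.Icc 1 (m + 1 - 0), qInt q (z - 2 * (j : ℤ) + 2)
          = q ^ ((a 1 : ℤ) - 2 * ((0 : ℕ) : ℤ))
              * mq q (brd m (fun i => p (i + 1)) (fun i => a (i + 1))) 0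
              * ∏ j ∈ Finset.Icc 1 (m + 1 - 0), qInt q (z - 2 * (j : ℤ) + 2) := by
        rw [mq_rec_zero p a m hm hd q]
        norm_num
      rw [hzero, ← Finset.sum_range_succ' (fun k =>
        q ^ ((a 1 : ℤ) - 2 * ((k : ℕ) : ℤ))
          * mq q (brd m (fun i => p (i + 1)) (fun i => a (i + 1))) k
          * ∏ j ∈ Finset.Icc 1 (m + 1 - k), qInt q (z - 2 * (j : ℤ) + 2)) (m + 1),
        Finset.sum_range_succ]
      have hlast : mq q (brd m (fun i => p (i + 1)) (fun i => a (i + 1))) (m + 1) = 0 :=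
        mq_eq_zero (by omega)
      rw [hlast]
      ring
    rw [add_assoc, add_comm (∑ k ∈ Finset.range (m + 1),
        qInt q ((a 1 : ℤ) - 2 * (k : ℤ))
          * mq q (brd m (fun i => p (i + 1)) (fun i => a (i + 1))) k
          * ∏ j ∈ Finset.Icc 1 (m - k), qInt q (z - 2 * (j : ℤ) + 2)), ← add_assoc,
      hshift]

/-- Product formula for matchings on l-lazy graphs (generalized Haglund–Remmel). -/
theorem lazy_matching_product (q : ℂ) (hq : q ≠ 0) (hq1 : q ≠ 1)
    (N : ℕ) (l A : ℕ → ℕ)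
    (hl : ∀ i, 1 ≤ i → i ≤ N → 1 ≤ l i)
    (hanti : ∀ i, 1 ≤ i → i + 1 ≤ N → A (i + 1) ≤ A i)
    (hle : ∀ i, 1 ≤ i → i ≤ N → A i ≤ Lsum l (N - i + 1))
    (hgap : ∀ i, 1 ≤ i → i + 1 ≤ N → A (i + 1) ≠ 0 → l (N + 1 - i) + A (i + 1) ≤ A i)
    (z : ℤ) :
    ∏ i ∈ Finset.Icc 1 N, qInt q (z + (A (N - i + 1) : ℤ) - 2 * (i : ℤ) + 2)
      = ∑ k ∈ Finset.range (N + 1),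
          mq q (lFerrers N l A) k
            * ∏ j ∈ Finset.Icc 1 (N - k), qInt q (z - 2 * (j : ℤ) + 2) := by
  have hmono : ∀ i j, 1 ≤ i → i < j → j ≤ N
      → (fun i => Lsum l N - Lsum l (N - i + 1) + 1) i
        < (fun i => Lsum l N - Lsum l (N - i + 1) + 1) j := by
    intro i j h1 h2 h3
    simp only
    have h5 := lsum_succ l (N - j + 1)
    have h6 : 1 ≤ l (N - j + 1 + 1) := hl (N - j + 1 + 1) (by omega) (by omega)
    have h7 : Lsum l (N - j + 1 + 1) ≤ Lsum l (N - i + 1) := lsum_mono l (by omega)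
    have h8 : Lsum l (N - i + 1) ≤ Lsum l N := lsum_mono l (by omega)
    omega
  have hdom : ∀ j, j ≤ N → ∀ i, 1 ≤ i → i ≤ j → 1 ≤ A j
      → (Lsum l N - Lsum l (N - j + 1) + 1) + A j
        ≤ (Lsum l N - Lsum l (N - i + 1) + 1) + A i := by
    intro j
    induction j with
    | zero =>
      intro _ i h1 h2 _
      omega
    | succ j ihj =>
      intro hjN i hi hij hA
      rcases Nat.lt_or_ge i (j + 1) with hlt | hge
      · have hij' : i ≤ j := by omega
        have hj1 : 1 ≤ j := by omega
        have hAj : 1 ≤ A j := by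
          have := hanti j hj1 hjN
          omega
        have hgapj := hgap j hj1 hjN (by omega)
        have harg : N + 1 - j = N - j + 1 := by omega
        rw [harg] at hgapj
        have hls := lsum_succ l (N - j)
        have harg2 : N - (j + 1) + 1 = N - j := by omega
        have harg3 : N - j + 1 = N - j + 1 := rfl
        have e2 : Lsum l (N - j + 1) ≤ Lsum l N := lsum_mono l (by omega)
        have hstep : (Lsum l N - Lsum l (N - (j + 1) + 1) + 1) + A (j + 1)
            ≤ (Lsum l N - Lsum l (N - j + 1) + 1) + A j := by
          rw [harg2]
          omega
        exact le_trans hstep (ihj (by omega) i hi hij' hAj)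
      · have hieq : i = j + 1 := by omega
        subst hieq
        exact le_refl _
  rw [lFerrers_eq_brd N l A]
  exact G q hq hq1 N (fun i => Lsum l N - Lsum l (N - i + 1) + 1) A hmono
    (fun i j h1 h2 h3 h4 => hdom j h3 i h1 h2 h4) z

end EllRook
end
end
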